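/- arXiv:2404.04512 — 3 statements merged into one kernel-verified Lean document; each statement's English description precedes it below -/
import Mathlib

section
/- For every positive integer n, the quasi-Kostka matrix Q(n), whose rows and columns are indexed by the partitions of n listed in reverse lexicographic order (largest first) and whose (λ,μ)-entry is QK_{λ,μ}, is upper unitriangular: all diagonal entries equal 1 and all entries strictly below the diagonal equal 0. Consequently Q(n) is invertible and its inverse has integer entries. -/
/-- A semistandard Young tableau (French notation) of shape given by the list `l` of row
lengths (row `0` is the bottom row).  Entries are positive integers; rows weakly increase
from left to right and columns strictly increase from bottom to top (entries outside the
shape are recorded as `0`). -/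
structure SSYT (l : List ℕ) where
  entry : ℕ → ℕ → ℕ
  pos : ∀ i j, j < l.getD i 0 → 1 ≤ entry i j
  zeros : ∀ i j, ¬ j < l.getD i 0 → entry i j = 0
  rowWeak : ∀ i j1 j2, j1 ≤ j2 → j2 < l.getD i 0 → entry i j1 ≤ entry i j2
  colStrict : ∀ i1 i2 j, i1 < i2 → j < l.getD i2 0 → entry i1 j < entry i2 j

/-- The cells of the Young diagram of `l`. -/
def cellsOf (l : List ℕ) : Finset (ℕ × ℕ) :=
  (Finset.range l.length).biUnion fun i =>
    (Finset.range (l.getD i 0)).image fun j => (i, j)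

/-- The number of entries of `T` equal to `k`. -/
def wtOf {l : List ℕ} (T : SSYT l) (k : ℕ) : ℕ :=
  ((cellsOf l).filter fun c => T.entry c.1 c.2 = k).card

/-- A tableau is quasi-Yamanouchi if whenever a value `k > 1` appears, some entry equal
to `k` lies in a strictly higher row than some entry equal to `k - 1`. -/
def IsQYT {l : List ℕ} (T : SSYT l) : Prop :=
  ∀ k, 2 ≤ k → (∃ c ∈ cellsOf l, T.entry c.1 c.2 = k) →
    ∃ c ∈ cellsOf l, ∃ c' ∈ cellsOf l,
      T.entry c.1 c.2 = k ∧ T.entry c'.1 c'.2 = k - 1 ∧ c'.1 < c.1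

/-- `QK l α` : the number of quasi-Yamanouchi tableaux of shape `l` and weight `α`. -/
noncomputable def QK (l α : List ℕ) : ℕ :=
  Set.ncard {T : SSYT l | IsQYT T ∧ ∀ i, wtOf T (i + 1) = α.getD i 0}

/-- `l` is (the list of parts of) a partition of `n`. -/
def IsPartitionOf (n : ℕ) (l : List ℕ) : Prop :=
  l.Pairwise (· ≥ ·) ∧ (∀ x ∈ l, 0 < x) ∧ l.sum = n

/-- `l` is (the list of parts of) a composition of `n`. -/
def IsCompositionOf (n : ℕ) (l : List ℕ) : Prop :=
  (∀ x ∈ l, 0 < x) ∧ l.sum = n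

instance (n : ℕ) : DecidableEq (Composition n) := fun a b =>
  decidable_of_iff (a.blocks = b.blocks) (by
    constructor
    · intro h; ext1; exact h
    · intro h; rw [h])

/-- The partitions of `n`, realized as compositions of `n` with weakly decreasing parts. -/
abbrev PartitionList (n : ℕ) := {c : Composition n // c.blocks.Pairwise (· ≥ ·)}

-- helper lemmas
theorem mem_cellsOf {l : List ℕ} {c : ℕ × ℕ} :
    c ∈ cellsOf l ↔ c.1 < l.length ∧ c.2 < l.getD c.1 0 := by
  obtain ⟨i, j⟩ := c
  simp only [cellsOf, Finset.mem_biUnion, Finset.mem_range, Finset.mem_image]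
  constructor
  · rintro ⟨a, ha, b, hb, h⟩
    obtain ⟨rfl, rfl⟩ := Prod.mk.injEq .. ▸ h
    exact ⟨(Prod.mk.injEq .. ▸ h).1 ▸ ha, hb⟩
  · rintro ⟨h1, h2⟩; exact ⟨i, h1, j, h2, rfl⟩

theorem getD_anti {l : List ℕ} (hs : l.Pairwise (· ≥ ·)) {i i' : ℕ} (h : i ≤ i') :
    l.getD i' 0 ≤ l.getD i 0 := by
  by_cases hi' : i' < l.length
  · have hi : i < l.length := lt_of_le_of_lt h hi'
    rw [List.getD_eq_getElem l 0 hi', List.getD_eq_getElem l 0 hi]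
    rcases eq_or_lt_of_le h with rfl | hlt
    · exact le_refl _
    · simpa [List.get_eq_getElem] using List.pairwise_iff_get.mp hs ⟨i, hi⟩ ⟨i', hi'⟩ hlt
  · rw [List.getD_eq_default l 0 (le_of_not_gt hi')]; exact Nat.zero_le _

theorem entry_lb {l : List ℕ} (hs : l.Pairwise (· ≥ ·)) (T : SSYT l) :
    ∀ i j, j < l.getD i 0 → i + 1 ≤ T.entry i j := by
  intro i
  induction i with
  | zero => exact fun j hj => T.pos 0 j hj
  | succ i ih =>
    intro j hj
    have hj' : j < l.getD i 0 := lt_of_lt_of_le hj (getD_anti hs (Nat.le_succ i))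
    exact Nat.succ_le_of_lt (lt_of_le_of_lt (ih j hj') (T.colStrict i (i+1) j (Nat.lt_succ_self i) hj))

theorem row_filter (l : List ℕ) (i : ℕ) :
    ((cellsOf l).filter fun c => c.1 = i) = (Finset.range (l.getD i 0)).image fun j => (i, j) := by
  ext ⟨a, b⟩
  simp only [Finset.mem_filter, mem_cellsOf, Finset.mem_image, Finset.mem_range]
  constructor
  · rintro ⟨⟨h1, h2⟩, rfl⟩; exact ⟨b, h2, rfl⟩
  · rintro ⟨j, hj, h⟩
    obtain ⟨rfl, rfl⟩ : i = a ∧ j = b := by simpa using h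
    refine ⟨⟨?_, hj⟩, rfl⟩
    by_contra hlen
    rw [List.getD_eq_default l 0 (le_of_not_gt hlen)] at hj
    exact Nat.not_lt_zero _ hj

theorem card_row_filter (l : List ℕ) (i : ℕ) :
    ((cellsOf l).filter fun c => c.1 = i).card = l.getD i 0 := by
  rw [row_filter, Finset.card_image_of_injective _ (fun a b h => by simpa using h),
    Finset.card_range]

/-- cells in rows < k -/
theorem card_rows_lt (l : List ℕ) (k : ℕ) :
    ((cellsOf l).filter fun c => c.1 < k).card = ∑ i ∈ Finset.range k, l.getD i 0 := by
  have : ((cellsOf l).filter fun c => c.1 < k)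
      = (Finset.range k).biUnion fun i => (cellsOf l).filter fun c => c.1 = i := by
    ext c
    simp only [Finset.mem_filter, Finset.mem_biUnion, Finset.mem_range]
    constructor
    · rintro ⟨hc, hk⟩; exact ⟨c.1, hk, hc, rfl⟩
    · rintro ⟨i, hik, hc, rfl⟩; exact ⟨hc, hik⟩
  rw [this, Finset.card_biUnion]
  · exact Finset.sum_congr rfl fun i _ => card_row_filter l i
  · intro x _ y _ hxy
    simp only [Finset.disjoint_filter]
    rintro c _ rfl h; exact hxy h

/-- cells with entry ≤ k -/
theorem card_entry_le {l : List ℕ} (T : SSYT l) (α : List ℕ)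
    (hw : ∀ i, wtOf T (i + 1) = α.getD i 0) (k : ℕ) :
    ((cellsOf l).filter fun c => T.entry c.1 c.2 ≤ k).card
      = ∑ v ∈ Finset.range k, α.getD v 0 := by
  have : ((cellsOf l).filter fun c => T.entry c.1 c.2 ≤ k)
      = (Finset.range k).biUnion fun v => (cellsOf l).filter fun c => T.entry c.1 c.2 = v + 1 := by
    ext c
    simp only [Finset.mem_filter, Finset.mem_biUnion, Finset.mem_range]
    constructor
    · rintro ⟨hc, hk⟩
      have h1 : 1 ≤ T.entry c.1 c.2 := T.pos c.1 c.2 (mem_cellsOf.mp hc).2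
      exact ⟨T.entry c.1 c.2 - 1, by omega, hc, by omega⟩
    · rintro ⟨v, hvk, hc, hv⟩; exact ⟨hc, by omega⟩
  rw [this, Finset.card_biUnion]
  · exact Finset.sum_congr rfl fun v _ => hw v
  · intro x _ y _ hxy
    simp only [Finset.disjoint_filter]
    rintro c _ h h'; omega

theorem entry_le_subset_rows_lt {l : List ℕ} (hs : l.Pairwise (· ≥ ·)) (T : SSYT l) (k : ℕ) :
    ((cellsOf l).filter fun c => T.entry c.1 c.2 ≤ k)
      ⊆ (cellsOf l).filter fun c => c.1 < k := by
  intro c hc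
  obtain ⟨hcell, hle⟩ := Finset.mem_filter.mp hc
  have := entry_lb hs T c.1 c.2 (mem_cellsOf.mp hcell).2
  exact Finset.mem_filter.mpr ⟨hcell, by omega⟩

theorem dominance {l α : List ℕ} (hs : l.Pairwise (· ≥ ·)) (T : SSYT l)
    (hw : ∀ i, wtOf T (i + 1) = α.getD i 0) (k : ℕ) :
    ∑ v ∈ Finset.range k, α.getD v 0 ≤ ∑ i ∈ Finset.range k, l.getD i 0 := by
  rw [← card_entry_le T α hw k, ← card_rows_lt l k]
  exact Finset.card_le_card (entry_le_subset_rows_lt hs T k)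

theorem not_lex_of_dominance : ∀ {l μ : List ℕ}, (∀ x ∈ μ, 0 < x) →
    (∀ k, ∑ v ∈ Finset.range k, μ.getD v 0 ≤ ∑ i ∈ Finset.range k, l.getD i 0) →
    ¬ List.Lex (· < ·) l μ := by
  intro l μ hpos hdom hlex
  induction hlex with
  | @nil b bs =>
    have hb := hpos b (by simp)
    have := hdom 1
    simp [Finset.sum_range_one] at this
    omega
  | @rel a b as bs h =>
    have := hdom 1
    simp [Finset.sum_range_one] at this
    omega
  | @cons a as bs h ih =>
    refine ih (fun x hx => hpos x (List.mem_cons_of_mem a hx)) fun k => ?_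
    have := hdom (k + 1)
    rw [Finset.sum_range_succ', Finset.sum_range_succ'] at this
    simpa using this

theorem SSYT.ext' {l : List ℕ} {S T : SSYT l} (h : S.entry = T.entry) : S = T := by
  cases S; cases T; cases h; rfl

def superstandard (l : List ℕ) (hs : l.Pairwise (· ≥ ·)) : SSYT l where
  entry i j := if j < l.getD i 0 then i + 1 else 0
  pos i j h := by rw [if_pos h]; omega
  zeros i j h := by rw [if_neg h]
  rowWeak i j1 j2 h12 h2 := by
    rw [if_pos (lt_of_le_of_lt h12 h2), if_pos h2]
  colStrict i1 i2 j h12 h2 := by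
    rw [if_pos h2]
    split <;> omega

theorem superstandard_entry {l : List ℕ} (hs : l.Pairwise (· ≥ ·)) (i j : ℕ) :
    (superstandard l hs).entry i j = if j < l.getD i 0 then i + 1 else 0 := rfl

theorem wt_superstandard {l : List ℕ} (hs : l.Pairwise (· ≥ ·)) (i : ℕ) :
    wtOf (superstandard l hs) (i + 1) = l.getD i 0 := by
  rw [wtOf, ← card_row_filter l i]
  congr 1
  apply Finset.filter_congr
  intro c hc
  have h2 := (mem_cellsOf.mp hc).2
  simp only [superstandard_entry, h2, if_true]
  omega

theorem qyt_superstandard {l : List ℕ} (hs : l.Pairwise (· ≥ ·)) :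
    IsQYT (superstandard l hs) := by
  intro k hk ⟨c, hc, hck⟩
  have h2 := (mem_cellsOf.mp hc).2
  have h1 := (mem_cellsOf.mp hc).1
  have hc1 : c.1 = k - 1 := by
    simp only [superstandard_entry, h2, if_true] at hck; omega
  have hrow : 0 < l.getD (k - 2) 0 := by
    calc 0 < l.getD c.1 0 := lt_of_le_of_lt (Nat.zero_le _) h2
    _ ≤ l.getD (k - 2) 0 := getD_anti hs (by omega)
  refine ⟨c, hc, (k - 2, 0), ?_, hck, ?_, ?_⟩
  · rw [mem_cellsOf]
    constructor
    · by_contra h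
      rw [List.getD_eq_default l 0 (le_of_not_gt h)] at hrow
      exact absurd hrow (by simp)
    · exact hrow
  · simp only [superstandard_entry, hrow, if_true]; omega
  · omega

theorem ssyt_weight_eq_shape_unique {l : List ℕ} (hs : l.Pairwise (· ≥ ·)) (T : SSYT l)
    (hw : ∀ i, wtOf T (i + 1) = l.getD i 0) : T = superstandard l hs := by
  have key : ∀ k, ((cellsOf l).filter fun c => T.entry c.1 c.2 ≤ k)
      = (cellsOf l).filter fun c => c.1 < k := by
    intro k
    apply Finset.eq_of_subset_of_card_le (entry_le_subset_rows_lt hs T k)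
    rw [card_entry_le T l hw k, card_rows_lt l k]
  apply SSYT.ext'
  funext i j
  by_cases hj : j < l.getD i 0
  · have hcell : (i, j) ∈ cellsOf l := by
      rw [mem_cellsOf]
      refine ⟨?_, hj⟩
      by_contra h
      rw [List.getD_eq_default l 0 (le_of_not_gt h)] at hj
      exact absurd hj (by simp)
    have hmem : (i, j) ∈ (cellsOf l).filter fun c => T.entry c.1 c.2 ≤ i + 1 := by
      rw [key (i + 1)]
      exact Finset.mem_filter.mpr ⟨hcell, Nat.lt_succ_self i⟩
    have hle : T.entry i j ≤ i + 1 := (Finset.mem_filter.mp hmem).2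
    have hge := entry_lb hs T i j hj
    simp only [superstandard_entry, hj, if_true]
    omega
  · rw [T.zeros i j hj, superstandard_entry, if_neg hj]

theorem QK_diag {l : List ℕ} (hs : l.Pairwise (· ≥ ·)) : QK l l = 1 := by
  rw [QK]
  have : {T : SSYT l | IsQYT T ∧ ∀ i, wtOf T (i + 1) = l.getD i 0}
      = {superstandard l hs} := by
    rw [Set.eq_singleton_iff_unique_mem]
    exact ⟨⟨qyt_superstandard hs, wt_superstandard hs⟩,
      fun T hT => ssyt_weight_eq_shape_unique hs T hT.2⟩
  rw [this, Set.ncard_singleton]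

theorem QK_zero {l μ : List ℕ} (hs : l.Pairwise (· ≥ ·)) (hpos : ∀ x ∈ μ, 0 < x)
    (hlex : List.Lex (· < ·) l μ) : QK l μ = 0 := by
  rw [QK]
  have : {T : SSYT l | IsQYT T ∧ ∀ i, wtOf T (i + 1) = μ.getD i 0} = ∅ := by
    rw [Set.eq_empty_iff_forall_notMem]
    rintro T ⟨_, hw⟩
    exact not_lex_of_dominance hpos (dominance hs T hw) hlex
  rw [this, Set.ncard_empty]


/-- The quasi-Kostka matrix Q(n), whose rows and columns are indexed by
the partitions of n listed in reverse lexicographic order (largest first) and whose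
(λ,μ)-entry is QK_{λ,μ}, is upper unitriangular: its diagonal entries are all 1 and its
entries strictly below the diagonal (i.e. those whose row partition is lexicographically
smaller than the column partition) are all 0.  Consequently Q(n) is invertible and its
inverse has integer entries. -/
theorem quasiKostka_unitriangular (n : ℕ) (hn : 0 < n)
    (Q : Matrix (PartitionList n) (PartitionList n) ℤ)
    (hQ : ∀ p q : PartitionList n, Q p q = QK p.1.blocks q.1.blocks) :
    (∀ p : PartitionList n, Q p p = 1) ∧
    (∀ p q : PartitionList n, List.Lex (· < ·) p.1.blocks q.1.blocks → Q p q = 0) ∧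
    (∃ B : Matrix (PartitionList n) (PartitionList n) ℤ, Q * B = 1 ∧ B * Q = 1) := by
  classical
  have hdiag : ∀ p : PartitionList n, Q p p = 1 := by
    intro p
    rw [hQ, QK_diag p.2]
    exact Nat.cast_one
  have hzero : ∀ p q : PartitionList n,
      List.Lex (· < ·) p.1.blocks q.1.blocks → Q p q = 0 := by
    intro p q h
    rw [hQ, QK_zero p.2 (fun x hx => q.1.blocks_pos hx) h]
    exact Nat.cast_zero
  refine ⟨hdiag, hzero, ?_⟩
  letI : LinearOrder (PartitionList n) :=
    LinearOrder.lift' (fun p => OrderDual.toDual p.1.blocks)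
      (fun a b h => Subtype.ext (by ext1; exact congrArg OrderDual.ofDual h))
  have hbt : Q.BlockTriangular id := by
    intro p q hlt
    exact hzero p q hlt
  have hdet : Q.det = 1 := by
    rw [Matrix.det_of_upperTriangular hbt]
    exact Finset.prod_eq_one fun p _ => hdiag p
  have hu : IsUnit Q.det := by rw [hdet]; exact isUnit_one
  exact ⟨Q⁻¹, Q.mul_nonsing_inv hu, Q.nonsing_inv_mul hu⟩
end

section
/- Let w, h ≥ 1 and let λ = (λ1, λ2) with λ1 ≥ λ2 ≥ 0 and λ1 + λ2 = wh. In the (unique) Schur expansion s_w[s_h](x,y) = Σ_{(λ1,λ2) ⊢ wh} a^{(λ1,λ2)} s_{(λ1,λ2)}(x,y) over two-row partitions of wh, the coefficient a^{(λ1,λ2)} equals (the number of partitions of λ2 with all parts ≤ w and at most h parts) minus (the number of partitions of λ2 − 1 with all parts ≤ w and at most h parts), where the number of partitions of −1 is 0. -/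
open MvPolynomial in
/-- The two-variable Schur polynomial `s_{(a,b)}(x,y)` for a partition `(a,b)` with
`a ≥ b ≥ 0`:  `s_{(a,b)}(x,y) = (xy)^b (x^{a-b+1} - y^{a-b+1})/(x-y)
= Σ_{i=0}^{a-b} x^{a-i} y^{b+i}`, the weight generating function of semistandard Young
tableaux of shape `(a,b)` with entries in `{1,2}` (`x = X 0`, `y = X 1`). -/
noncomputable def schur2 (a b : ℕ) : MvPolynomial (Fin 2) ℤ :=
  ∑ i ∈ Finset.range (a - b + 1), X 0 ^ (a - i) * X 1 ^ (b + i)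

open MvPolynomial in
/-- The plethysm `s_w[s_h](x,y)`: the complete homogeneous symmetric polynomial of degree
`w` evaluated at the `h+1` monomials `x^h, x^{h-1}y, …, y^h` of `s_{(h)}(x,y)`,
i.e. the sum over all multisets of size `w` of these monomials (coded by weakly
increasing functions `f : Fin w → Fin (h+1)`) of their products. -/
noncomputable def pleth2 (w h : ℕ) : MvPolynomial (Fin 2) ℤ :=
  ∑ f ∈ Finset.univ.filter (fun f : Fin w → Fin (h + 1) =>
      ∀ i j : Fin w, i ≤ j → f i ≤ f j),
    ∏ j : Fin w, (X 0 ^ (h - (f j : ℕ)) * X 1 ^ ((f j : ℕ)))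

/-- The number of partitions of `k` whose parts are at most `w`, with at most `h`
parts. -/
noncomputable def countBoxed (w h k : ℕ) : ℕ :=
  Set.ncard {l : List ℕ |
    l.Pairwise (· ≥ ·) ∧ (∀ x ∈ l, 0 < x ∧ x ≤ w) ∧ l.length ≤ h ∧ l.sum = k}


namespace PlethAux



/-- cardinality of Fin-filter equals range-filter -/
lemma card_filter_fin_eq (n : ℕ) (p : ℕ → Prop) [DecidablePred p] :
    (Finset.univ.filter (fun i : Fin n => p (i : ℕ))).card
      = ((Finset.range n).filter p).card := by
  refine Finset.card_nbij (fun i => (i : ℕ)) ?_ ?_ ?_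
  · intro a ha
    simp only [Finset.mem_coe, Finset.mem_filter, Finset.mem_univ, true_and] at ha
    simp [Finset.mem_range, a.isLt, ha]
  · intro a h1 a2 h2 hh
    exact Fin.val_injective hh
  · intro b hb
    simp only [Finset.coe_filter, Finset.mem_range, Set.mem_setOf_eq] at hb
    exact ⟨⟨b, hb.1⟩, by simp [hb.2], rfl⟩

lemma card_filter_le_val (n a : ℕ) :
    (Finset.univ.filter (fun i : Fin n => a ≤ (i : ℕ))).card = n - a := by
  rw [card_filter_fin_eq]
  have : (Finset.range n).filter (fun i => a ≤ i) = Finset.Ico (min a n) n := by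
    ext x; simp only [Finset.mem_filter, Finset.mem_range, Finset.mem_Ico]; omega
  rw [this, Nat.card_Ico]; omega

lemma card_filter_sub_lt (h c : ℕ) (hc : c ≤ h) :
    (Finset.univ.filter (fun i : Fin h => h - 1 - (i : ℕ) < c)).card = c := by
  have : (Finset.univ.filter (fun i : Fin h => h - 1 - (i : ℕ) < c))
      = (Finset.univ.filter (fun i : Fin h => h - c ≤ (i : ℕ))) := by
    ext i
    simp only [Finset.mem_filter, Finset.mem_univ, true_and]
    have := i.isLt
    omega
  rw [this, card_filter_le_val]; omega

/-- Key lemma for conjugation. -/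
lemma key {w h : ℕ} (f : Fin w → Fin (h + 1))
    (hf : ∀ i j : Fin w, i ≤ j → f i ≤ f j) (j : Fin w) (c : ℕ) :
    w - 1 - (j : ℕ) < (Finset.univ.filter (fun j' : Fin w => c < (f j' : ℕ))).card
      ↔ c < (f j : ℕ) := by
  constructor
  · intro hcard
    by_contra hc
    push_neg at hc
    have hsub : (Finset.univ.filter (fun j' : Fin w => c < (f j' : ℕ)))
        ⊆ (Finset.univ.filter (fun j' : Fin w => (j : ℕ) + 1 ≤ (j' : ℕ))) := by
      intro j' hj'
      simp only [Finset.mem_filter, Finset.mem_univ, true_and] at hj' ⊢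
      by_contra hlt
      push_neg at hlt
      have : j' ≤ j := by rw [Fin.le_def]; omega
      have := hf j' j this
      rw [Fin.le_def] at this
      omega
    have := Finset.card_le_card hsub
    rw [card_filter_le_val] at this
    have := j.isLt
    omega
  · intro hc
    have hsub : (Finset.univ.filter (fun j' : Fin w => (j : ℕ) ≤ (j' : ℕ)))
        ⊆ (Finset.univ.filter (fun j' : Fin w => c < (f j' : ℕ))) := by
      intro j' hj'
      simp only [Finset.mem_filter, Finset.mem_univ, true_and] at hj' ⊢
      have : j ≤ j' := by rwa [Fin.le_def]
      have := hf j j' this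
      rw [Fin.le_def] at this
      omega
    have := Finset.card_le_card hsub
    rw [card_filter_le_val] at this
    have := j.isLt
    omega

/-- Conjugation of a function. -/
noncomputable def conj {w h : ℕ} (f : Fin w → Fin (h + 1)) : Fin h → Fin (w + 1) :=
  fun i => ⟨(Finset.univ.filter (fun j : Fin w => h - 1 - (i : ℕ) < (f j : ℕ))).card,
    Nat.lt_succ_of_le (le_trans (Finset.card_filter_le _ _) (by simp))⟩

lemma conj_mono {w h : ℕ} (f : Fin w → Fin (h + 1)) :
    ∀ i j : Fin h, i ≤ j → conj f i ≤ conj f j := by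
  intro i j hij
  rw [Fin.le_def] at hij ⊢
  simp only [conj]
  apply Finset.card_le_card
  intro x hx
  simp only [Finset.mem_filter, Finset.mem_univ, true_and] at hx ⊢
  omega

lemma conj_sum {w h : ℕ} (f : Fin w → Fin (h + 1)) :
    ∑ i : Fin h, ((conj f i : ℕ)) = ∑ j : Fin w, ((f j : ℕ)) := by
  have : ∀ i : Fin h, ((conj f i : ℕ))
      = ∑ j : Fin w, (if h - 1 - (i : ℕ) < (f j : ℕ) then 1 else 0) := by
    intro i
    simp only [conj]
    rw [Finset.card_filter]
  simp_rw [this]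
  rw [Finset.sum_comm]
  congr 1
  funext j
  rw [← Finset.card_filter]
  exact card_filter_sub_lt h (f j : ℕ) (Fin.is_le _)

lemma conj_conj {w h : ℕ} (f : Fin w → Fin (h + 1))
    (hf : ∀ i j : Fin w, i ≤ j → f i ≤ f j) : conj (conj f) = f := by
  funext j
  apply Fin.ext
  show (Finset.univ.filter (fun i : Fin h => w - 1 - (j : ℕ) < ((conj f i : ℕ)))).card
      = (f j : ℕ)
  have : ∀ i : Fin h, (w - 1 - (j : ℕ) < ((conj f i : ℕ))) ↔ (h - 1 - (i : ℕ) < (f j : ℕ)) := by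
    intro i
    exact key f hf j (h - 1 - (i : ℕ))
  have heq : (Finset.univ.filter (fun i : Fin h => w - 1 - (j : ℕ) < ((conj f i : ℕ))))
      = (Finset.univ.filter (fun i : Fin h => h - 1 - (i : ℕ) < (f j : ℕ))) := by
    ext i; simp [this i]
  rw [heq]
  exact card_filter_sub_lt h (f j : ℕ) (Fin.is_le _)



/-- Monotone functions `Fin w → Fin (h+1)` with value-sum `S`. -/
noncomputable def A (w h S : ℕ) : Finset (Fin w → Fin (h + 1)) :=
  (Finset.univ.filter (fun f : Fin w → Fin (h + 1) =>
      ∀ i j : Fin w, i ≤ j → f i ≤ f j)).filter (fun f => ∑ j, ((f j : ℕ)) = S)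

lemma mem_A {w h S : ℕ} {f : Fin w → Fin (h + 1)} :
    f ∈ A w h S ↔ (∀ i j : Fin w, i ≤ j → f i ≤ f j) ∧ ∑ j, ((f j : ℕ)) = S := by
  simp [A]

/-- complement function -/
def compl {w h : ℕ} (f : Fin w → Fin (h + 1)) : Fin w → Fin (h + 1) :=
  fun j => ⟨h - (f (Fin.rev j) : ℕ), Nat.lt_succ_of_le (Nat.sub_le _ _)⟩

lemma compl_sum {w h S : ℕ} (f : Fin w → Fin (h + 1))
    (hs : ∑ j, ((f j : ℕ)) = S) : ∑ j, ((compl f j : ℕ)) = w * h - S := by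
  have hrev : ∑ j : Fin w, (h - (f (Fin.rev j) : ℕ)) = ∑ j : Fin w, (h - (f j : ℕ)) :=
    Fintype.sum_bijective Fin.rev Fin.rev_bijective _ _ (fun _ => rfl)
  have hS : S ≤ w * h := by
    rw [← hs]
    calc ∑ j, ((f j : ℕ)) ≤ ∑ _j : Fin w, h := Finset.sum_le_sum (fun j _ => Fin.is_le _)
    _ = w * h := by simp [Finset.sum_const, mul_comm]
  have hadd : (∑ j : Fin w, (h - (f j : ℕ))) + S = w * h := by
    rw [← hs, ← Finset.sum_add_distrib]
    calc ∑ j : Fin w, (h - (f j : ℕ) + (f j : ℕ)) = ∑ _j : Fin w, h := by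
          apply Finset.sum_congr rfl
          intro j _
          exact Nat.sub_add_cancel (Fin.is_le _)
    _ = w * h := by simp [Finset.sum_const, mul_comm]
  show ∑ j : Fin w, (h - (f (Fin.rev j) : ℕ)) = w * h - S
  omega

lemma compl_mono {w h : ℕ} (f : Fin w → Fin (h + 1))
    (hf : ∀ i j : Fin w, i ≤ j → f i ≤ f j) :
    ∀ i j : Fin w, i ≤ j → compl f i ≤ compl f j := by
  intro i j hij
  have : Fin.rev j ≤ Fin.rev i := by
    rw [Fin.rev_le_rev]; exact hij
  have := hf _ _ this
  rw [Fin.le_def] at this ⊢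
  simp only [compl]
  omega

lemma compl_compl {w h : ℕ} (f : Fin w → Fin (h + 1)) : compl (compl f) = f := by
  funext j
  apply Fin.ext
  simp only [compl, Fin.rev_rev]
  exact Nat.sub_sub_self (Fin.is_le _)

lemma card_A_compl {w h S : ℕ} (hS : S ≤ w * h) :
    (A w h S).card = (A w h (w * h - S)).card := by
  refine Finset.card_nbij' compl compl ?_ ?_ ?_ ?_
  · intro f hf
    rw [Finset.mem_coe, mem_A] at hf ⊢
    exact ⟨compl_mono f hf.1, by rw [compl_sum f hf.2]⟩
  · intro f hf
    rw [Finset.mem_coe, mem_A] at hf ⊢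
    refine ⟨compl_mono f hf.1, ?_⟩
    rw [compl_sum f hf.2]
    omega
  · intro f _; exact compl_compl f
  · intro f _; exact compl_compl f


lemma card_A_symm (w h S : ℕ) : (A w h S).card = (A h w S).card := by
  refine Finset.card_nbij' conj conj ?_ ?_ ?_ ?_
  · intro f hf
    rw [Finset.mem_coe, mem_A] at hf ⊢
    exact ⟨conj_mono f, by rw [conj_sum f, hf.2]⟩
  · intro f hf
    rw [Finset.mem_coe, mem_A] at hf ⊢
    exact ⟨conj_mono f, by rw [conj_sum f, hf.2]⟩
  · intro f hf
    rw [Finset.mem_coe, mem_A] at hf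
    exact conj_conj f hf.1
  · intro f hf
    rw [Finset.mem_coe, mem_A] at hf
    exact conj_conj f hf.1

/-- Decomposition of a sorted list of naturals into positive part and zeros. -/
lemma sorted_decomp : ∀ (l : List ℕ), l.Pairwise (· ≥ ·) →
    l = l.filter (fun x => decide (0 < x))
      ++ List.replicate (l.length - (l.filter (fun x => decide (0 < x))).length) 0 := by
  intro l
  induction l with
  | nil => intro _; simp
  | cons a l ih =>
    intro hs
    rw [List.pairwise_cons] at hs
    rcases Nat.eq_zero_or_pos a with ha | ha
    · subst ha
      have hall : ∀ b ∈ l, b = 0 := fun b hb => Nat.le_zero.mp (hs.1 b hb)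
      have hrep : l = List.replicate l.length 0 := List.eq_replicate_of_mem hall
      have hfil : (0 :: l).filter (fun x => decide (0 < x)) = [] := by
        rw [List.filter_eq_nil_iff]
        intro b hb
        rcases List.mem_cons.mp hb with rfl | hb
        · simp
        · simp [hall b hb]
      rw [hfil]
      simp only [List.nil_append, List.length_nil, Nat.sub_zero]
      conv_lhs => rw [hrep]
      simp [List.replicate_succ]
    · have hfil : (a :: l).filter (fun x => decide (0 < x))
          = a :: l.filter (fun x => decide (0 < x)) := by
        rw [List.filter_cons_of_pos]
        simp [ha]
      rw [hfil]
      simp only [List.cons_append, List.length_cons]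
      rw [Nat.succ_sub_succ]
      exact congrArg (a :: ·) (ih hs.2)

lemma getD_anti {l : List ℕ} (hs : l.Pairwise (· ≥ ·)) {a b : ℕ} (hab : a ≤ b) :
    l.getD b 0 ≤ l.getD a 0 := by
  rcases lt_or_ge b l.length with hb | hb
  · have ha : a < l.length := lt_of_le_of_lt hab hb
    rw [List.getD_eq_getElem _ _ hb, List.getD_eq_getElem _ _ ha]
    rcases eq_or_lt_of_le hab with rfl | hlt
    · exact le_refl _
    · have := List.pairwise_iff_get.mp hs ⟨a, ha⟩ ⟨b, hb⟩ hlt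
      simpa using this
  · rw [List.getD_eq_default _ _ hb]
    exact Nat.zero_le _

lemma getD_mem_or (l : List ℕ) (n : ℕ) : l.getD n 0 ∈ l ∨ l.getD n 0 = 0 := by
  rcases lt_or_ge n l.length with hn | hn
  · left
    rw [List.getD_eq_getElem _ _ hn]
    exact List.getElem_mem _
  · right
    exact List.getD_eq_default _ _ hn

/-- the "zero padded" list of values of `f`, largest first -/
def lz {h w : ℕ} (f : Fin h → Fin (w + 1)) : List ℕ :=
  List.ofFn (fun i : Fin h => (f (Fin.rev i) : ℕ))

def toList {h w : ℕ} (f : Fin h → Fin (w + 1)) : List ℕ :=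
  (lz f).filter (fun x => decide (0 < x))

lemma lz_sorted {h w : ℕ} (f : Fin h → Fin (w + 1))
    (hf : ∀ i j : Fin h, i ≤ j → f i ≤ f j) : (lz f).Pairwise (· ≥ ·) := by
  rw [lz, List.pairwise_ofFn]
  intro i j hij
  have : Fin.rev j ≤ Fin.rev i := by
    rw [Fin.rev_le_rev]; exact le_of_lt hij
  have := hf _ _ this
  rw [Fin.le_def] at this
  exact this

lemma lz_sum {h w : ℕ} (f : Fin h → Fin (w + 1)) :
    (lz f).sum = ∑ i : Fin h, ((f i : ℕ)) := by
  rw [lz, List.sum_ofFn]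
  exact Fintype.sum_bijective Fin.rev Fin.rev_bijective _ _ (fun _ => rfl)

lemma lz_decomp {h w : ℕ} (f : Fin h → Fin (w + 1))
    (hf : ∀ i j : Fin h, i ≤ j → f i ≤ f j) :
    lz f = toList f ++ List.replicate (h - (toList f).length) 0 := by
  have := sorted_decomp (lz f) (lz_sorted f hf)
  rw [toList]
  have hlen : (lz f).length = h := by simp [lz]
  rw [hlen] at this
  exact this

lemma toList_sum {h w : ℕ} (f : Fin h → Fin (w + 1))
    (hf : ∀ i j : Fin h, i ≤ j → f i ≤ f j) :
    (toList f).sum = ∑ i : Fin h, ((f i : ℕ)) := by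
  have h1 := congrArg List.sum (lz_decomp f hf)
  rw [List.sum_append, List.sum_replicate, smul_zero, add_zero] at h1
  rw [← h1, lz_sum]

lemma toList_mem_A {w h S : ℕ} (f : Fin h → Fin (w + 1)) (hfA : f ∈ A h w S) :
    (toList f).Pairwise (· ≥ ·) ∧ (∀ x ∈ toList f, 0 < x ∧ x ≤ w) ∧
      (toList f).length ≤ h ∧ (toList f).sum = S := by
  rw [mem_A] at hfA
  refine ⟨(lz_sorted f hfA.1).filter _, ?_, ?_, by rw [toList_sum f hfA.1, hfA.2]⟩
  · intro x hx
    have hpos : 0 < x := by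
      have := List.of_mem_filter hx
      simpa using this
    have hmem : x ∈ lz f := List.mem_of_mem_filter hx
    rw [lz, List.mem_ofFn] at hmem
    obtain ⟨i, hi⟩ := hmem
    exact ⟨hpos, by rw [← hi]; exact Fin.is_le _⟩
  · calc (toList f).length ≤ (lz f).length := List.length_filter_le _ _
    _ = h := by simp [lz]

lemma toList_injOn {w h S : ℕ} :
    Set.InjOn toList ((A h w S : Finset (Fin h → Fin (w + 1))) : Set (Fin h → Fin (w + 1))) := by
  intro f hf f' hf' heq
  rw [Finset.mem_coe, mem_A] at hf hf'
  have hlz : lz f = lz f' := by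
    rw [lz_decomp f hf.1, lz_decomp f' hf'.1, heq]
  have := List.ofFn_injective hlz
  funext j
  have hj := congrFun this (Fin.rev j)
  simp only [Fin.rev_rev] at hj
  exact Fin.ext hj

lemma toList_surjOn {w h S : ℕ} (l : List ℕ)
    (hl : l.Pairwise (· ≥ ·) ∧ (∀ x ∈ l, 0 < x ∧ x ≤ w) ∧ l.length ≤ h ∧ l.sum = S) :
    ∃ f ∈ A h w S, toList f = l := by
  obtain ⟨hsort, hbound, hlen, hsum⟩ := hl
  set l' : List ℕ := l ++ List.replicate (h - l.length) 0 with hl'def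
  have hlen' : l'.length = h := by
    simp only [hl'def, List.length_append, List.length_replicate]
    omega
  have hsort' : l'.Pairwise (· ≥ ·) := by
    rw [hl'def, List.pairwise_append]
    refine ⟨hsort, ?_, ?_⟩
    · rw [List.pairwise_replicate]
      right; exact le_refl 0
    · intro a ha b hb
      have := List.eq_of_mem_replicate hb
      omega
  have hle' : ∀ x ∈ l', x ≤ w := by
    intro x hx
    rcases List.mem_append.mp hx with hx | hx
    · exact (hbound x hx).2
    · rw [List.eq_of_mem_replicate hx]; exact Nat.zero_le _
  have hgetD_le : ∀ n : ℕ, l'.getD n 0 ≤ w := by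
    intro n
    rcases getD_mem_or l' n with hm | hm
    · exact hle' _ hm
    · omega
  refine ⟨fun i : Fin h => ⟨l'.getD ((Fin.rev i : Fin h) : ℕ) 0, Nat.lt_succ_of_le (hgetD_le _)⟩,
    ?_, ?_⟩
  · rw [mem_A]
    constructor
    · intro i j hij
      rw [Fin.le_def]
      simp only
      apply getD_anti hsort'
      rw [← Fin.rev_le_rev] at hij
      exact hij
    · have hofn : List.ofFn (fun i : Fin h => l'.getD (i : ℕ) 0) = l' := by
        apply List.ext_get (by simp [hlen'])
        intro n h1 h2
        have hg : l'.getD n 0 = l'.get ⟨n, h2⟩ := by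
          rw [List.getD_eq_getElem l' 0 h2]; rfl
        simp only [List.get_ofFn, Fin.coe_cast]
        exact hg
      calc ∑ i : Fin h, l'.getD ((Fin.rev i : Fin h) : ℕ) 0
          = ∑ i : Fin h, l'.getD (i : ℕ) 0 :=
            Fintype.sum_bijective Fin.rev Fin.rev_bijective _ _ (fun _ => rfl)
        _ = (List.ofFn (fun i : Fin h => l'.getD (i : ℕ) 0)).sum := by rw [List.sum_ofFn]
        _ = l'.sum := by rw [hofn]
        _ = S := by
            rw [hl'def, List.sum_append, List.sum_replicate, smul_zero, add_zero, hsum]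
  · have hlzf : lz (fun i : Fin h =>
        (⟨l'.getD ((Fin.rev i : Fin h) : ℕ) 0, Nat.lt_succ_of_le (hgetD_le _)⟩ : Fin (w + 1)))
        = l' := by
      rw [lz]
      apply List.ext_get (by simp [hlen'])
      intro n h1 h2
      have hg : l'.getD n 0 = l'.get ⟨n, h2⟩ := by
        rw [List.getD_eq_getElem l' 0 h2]; rfl
      simp only [List.get_ofFn, Fin.rev_rev, Fin.coe_cast]
      exact hg
    rw [toList, hlzf, hl'def, List.filter_append]
    have h1 : l.filter (fun x => decide (0 < x)) = l := by
      rw [List.filter_eq_self]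
      intro a ha
      exact decide_eq_true (hbound a ha).1
    have h2 : (List.replicate (h - l.length) 0).filter (fun x => decide (0 < x)) = [] := by
      rw [List.filter_eq_nil_iff]
      intro a ha
      rw [List.eq_of_mem_replicate ha]
      simp
    rw [h1, h2, List.append_nil]

lemma countBoxed_eq_card_A (w h S : ℕ) :
    Set.ncard {l : List ℕ | l.Pairwise (· ≥ ·) ∧ (∀ x ∈ l, 0 < x ∧ x ≤ w) ∧
        l.length ≤ h ∧ l.sum = S} = (A h w S).card := by
  have hset : {l : List ℕ | l.Pairwise (· ≥ ·) ∧ (∀ x ∈ l, 0 < x ∧ x ≤ w) ∧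
      l.length ≤ h ∧ l.sum = S} = ↑((A h w S).image toList) := by
    ext l
    simp only [Set.mem_setOf_eq, Finset.coe_image, Set.mem_image, Finset.mem_coe]
    constructor
    · intro hl
      obtain ⟨f, hf, hfl⟩ := toList_surjOn l hl
      exact ⟨f, hf, hfl⟩
    · rintro ⟨f, hf, rfl⟩
      exact toList_mem_A f hf
  rw [hset, Set.ncard_coe_finset]
  exact Finset.card_image_of_injOn toList_injOn


lemma card_A_eq (w h S : ℕ) (hS : S ≤ w * h) :
    (A w h S).card = (A h w (min S (w * h - S))).card := by
  rcases le_or_gt S (w * h - S) with hle | hlt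
  · rw [min_eq_left hle]
    exact card_A_symm w h S
  · rw [min_eq_right (le_of_lt hlt)]
    rw [card_A_compl hS]
    exact card_A_symm w h (w * h - S)

open MvPolynomial

noncomputable def tmon (w h S : ℕ) : MvPolynomial (Fin 2) ℤ :=
  X 0 ^ (w * h - S) * X 1 ^ S

lemma sum_sub_eq (w h : ℕ) (f : Fin w → Fin (h + 1)) :
    ∑ j : Fin w, (h - (f j : ℕ)) = w * h - ∑ j : Fin w, ((f j : ℕ)) := by
  have hadd : (∑ j : Fin w, (h - (f j : ℕ))) + ∑ j : Fin w, ((f j : ℕ)) = w * h := by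
    rw [← Finset.sum_add_distrib]
    calc ∑ j : Fin w, (h - (f j : ℕ) + (f j : ℕ)) = ∑ _j : Fin w, h :=
          Finset.sum_congr rfl (fun j _ => Nat.sub_add_cancel (Fin.is_le _))
      _ = w * h := by simp [Finset.sum_const, mul_comm]
  omega

lemma sum_le (w h : ℕ) (f : Fin w → Fin (h + 1)) :
    ∑ j : Fin w, ((f j : ℕ)) ≤ w * h := by
  calc ∑ j : Fin w, ((f j : ℕ)) ≤ ∑ _j : Fin w, h :=
        Finset.sum_le_sum (fun j _ => Fin.is_le _)
    _ = w * h := by simp [Finset.sum_const, mul_comm]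

lemma prod_eq (w h : ℕ) (f : Fin w → Fin (h + 1)) :
    (∏ j : Fin w, (X 0 ^ (h - (f j : ℕ)) * X 1 ^ ((f j : ℕ)) : MvPolynomial (Fin 2) ℤ))
      = tmon w h (∑ j, ((f j : ℕ))) := by
  rw [Finset.prod_mul_distrib, Finset.prod_pow_eq_pow_sum, Finset.prod_pow_eq_pow_sum,
    tmon, sum_sub_eq]

lemma pleth2_eq (w h : ℕ) :
    pleth2 w h = ∑ S ∈ Finset.range (w * h + 1), (A w h S).card • tmon w h S := by
  rw [pleth2]
  rw [Finset.sum_congr rfl (fun f _ => prod_eq w h f)]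
  rw [← Finset.sum_fiberwise_of_maps_to (t := Finset.range (w * h + 1))
    (g := fun f : Fin w → Fin (h + 1) => ∑ j, ((f j : ℕ)))
    (fun f _ => Finset.mem_range.mpr (Nat.lt_succ_of_le (sum_le w h f)))
    (fun f => tmon w h (∑ j, ((f j : ℕ))))]
  apply Finset.sum_congr rfl
  intro S _
  have : ∀ f ∈ (Finset.univ.filter (fun f : Fin w → Fin (h + 1) =>
      ∀ i j : Fin w, i ≤ j → f i ≤ f j)).filter
        (fun f => (∑ j, ((f j : ℕ))) = S),
      tmon w h (∑ j, ((f j : ℕ))) = tmon w h S := by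
    intro f hf
    rw [Finset.mem_filter] at hf
    rw [hf.2]
  rw [Finset.sum_congr rfl this, Finset.sum_const]
  rfl

lemma schur2_eq (w h b : ℕ) (hb : b ≤ w * h / 2) :
    schur2 (w * h - b) b = ∑ S ∈ Finset.range (w * h + 1),
      if b ≤ S ∧ S ≤ w * h - b then tmon w h S else 0 := by
  have h2b : 2 * b ≤ w * h := by omega
  rw [schur2, ← Finset.sum_filter]
  have hsub : w * h - b - b = w * h - 2 * b := by omega
  rw [hsub]
  refine Finset.sum_nbij' (fun i => b + i) (fun S => S - b) ?_ ?_ ?_ ?_ ?_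
  · intro i hi
    rw [Finset.mem_range] at hi
    simp only [Finset.mem_filter, Finset.mem_range]
    omega
  · intro S hS
    simp only [Finset.mem_filter, Finset.mem_range] at hS
    rw [Finset.mem_range]
    omega
  · intro i _; omega
  · intro S hS
    simp only [Finset.mem_filter, Finset.mem_range] at hS
    omega
  · intro i hi
    rw [Finset.mem_range] at hi
    rw [tmon]
    congr 2
    omega

lemma telescope (C : ℕ → ℤ) (m : ℕ) :
    ∑ b ∈ Finset.range (m + 1), (C b - if b = 0 then 0 else C (b - 1)) = C m := by
  induction m with
  | zero => simp
  | succ m ih =>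
    rw [Finset.sum_range_succ, ih]
    simp only [Nat.succ_ne_zero, if_false, Nat.add_sub_cancel]
    ring


end PlethAux

/-- In the Schur expansion of the two-variable plethysm
s_w[s_h](x,y) = Σ_{(λ₁,λ₂) ⊢ wh} a^{(λ₁,λ₂)} s_{(λ₁,λ₂)}(x,y), the coefficient
a^{(λ₁,λ₂)} equals (the number of partitions of λ₂ with parts ≤ w and at most h parts)
minus (the number of partitions of λ₂ − 1 with parts ≤ w and at most h parts), the number
of partitions of −1 being 0. -/
theorem plethysm_two_variable_coeff (w h : ℕ) (hw : 1 ≤ w) (hh : 1 ≤ h) :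
    pleth2 w h =
      ∑ b ∈ Finset.range (w * h / 2 + 1),
        ((countBoxed w h b : ℤ) -
            (if b = 0 then 0 else (countBoxed w h (b - 1) : ℤ))) •
          schur2 (w * h - b) b := by
  classical
  have hC : ∀ k, countBoxed w h k = (PlethAux.A h w k).card := fun k => by
    unfold countBoxed
    exact PlethAux.countBoxed_eq_card_A w h k
  rw [PlethAux.pleth2_eq w h]
  have hRHS : ∀ b ∈ Finset.range (w * h / 2 + 1),
      ((countBoxed w h b : ℤ) - (if b = 0 then 0 else (countBoxed w h (b - 1) : ℤ))) •
          schur2 (w * h - b) b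
        = ∑ S ∈ Finset.range (w * h + 1),
            (if b ≤ S ∧ S ≤ w * h - b then
              ((countBoxed w h b : ℤ) - (if b = 0 then 0 else (countBoxed w h (b - 1) : ℤ)))
            else 0) • PlethAux.tmon w h S := by
    intro b hb
    rw [Finset.mem_range] at hb
    rw [PlethAux.schur2_eq w h b (by omega), Finset.smul_sum]
    apply Finset.sum_congr rfl
    intro S _
    rw [smul_ite, smul_zero]
    split_ifs <;> simp
  rw [Finset.sum_congr rfl hRHS, Finset.sum_comm]
  apply Finset.sum_congr rfl
  intro S hS
  rw [Finset.mem_range] at hS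
  have hSle : S ≤ w * h := by omega
  rw [← Finset.sum_smul, ← Nat.cast_smul_eq_nsmul ℤ]
  congr 1
  set m := min S (w * h - S) with hm
  have hm2 : m ≤ w * h / 2 := by omega
  have hfil : (Finset.range (w * h / 2 + 1)).filter
      (fun b => b ≤ S ∧ S ≤ w * h - b) = Finset.range (m + 1) := by
    ext b
    simp only [Finset.mem_filter, Finset.mem_range]
    omega
  rw [← Finset.sum_filter, hfil,
    PlethAux.telescope (fun k => (countBoxed w h k : ℤ)) m]
  have : countBoxed w h m = (PlethAux.A w h S).card := by
    rw [hC m, ← PlethAux.card_A_eq w h S hSle]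
  rw [this]
end

section
/- For every h ≥ 1 there exists a symmetric chain decomposition of L(3,h) that satisfies the pattern condition and restricts to a symmetric chain decomposition of L(3,h−1). -/
/-- `b` covers `a` in Young's lattice: `a ⊆ b` (componentwise, viewing partitions as
lists of parts padded by zeros) and `b` has exactly one more box than `a`. -/
def CoversBox (a b : List ℕ) : Prop :=
  (∀ i, a.getD i 0 ≤ b.getD i 0) ∧ b.sum = a.sum + 1

/-- The partitions lying in a `w × h` box: largest part at most `w`, at most `h`
parts. -/
def boxSet (w h : ℕ) : Set (List ℕ) :=
  {l | l.Pairwise (· ≥ ·) ∧ (∀ x ∈ l, 0 < x ∧ x ≤ w) ∧ l.length ≤ h}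

/-- `C` is a symmetric chain decomposition of the subset `S` of the partitions in a
`w × h` box: the members of `C` are nonempty saturated chains (recorded as lists,
increasing, consecutive elements differing by adding a single box) of elements of `S`,
the ranks of the minimal and maximal element of each chain sum to `w*h`, and every
element of `S` lies in exactly one chain of `C`. -/
structure IsSCDOn (w h : ℕ) (S : Set (List ℕ)) (C : Set (List (List ℕ))) : Prop where
  nonempty : ∀ c ∈ C, c ≠ []
  subset : ∀ c ∈ C, ∀ l ∈ c, l ∈ S
  saturated : ∀ c ∈ C, c.Chain' CoversBox
  symm : ∀ c ∈ C, c.headI.sum + (c.getLastD []).sum = w * h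
  partitioned : ∀ l ∈ S, ∃! c, c ∈ C ∧ l ∈ c

/-- A symmetric chain decomposition of `L(w,h)`, the poset of all partitions in a
`w × h` box. -/
def IsSCD (w h : ℕ) (C : Set (List (List ℕ))) : Prop :=
  IsSCDOn w h (boxSet w h) C

/-- The number of parts of `l` that are `≥ j`, i.e. the `j`-th column of the conjugate
partition (columns indexed starting at `1`). -/
def conjCount (l : List ℕ) (j : ℕ) : ℕ := l.countP (fun x => decide (j ≤ x))

/-- The `t`-th edge of the chain `c` (from its `t`-th to its `(t+1)`-st element) is
labelled `j`: the box added lies in column `j`. -/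
def EdgeLabelAt (c : List (List ℕ)) (t j : ℕ) : Prop :=
  conjCount (c.getD (t + 1) []) j = conjCount (c.getD t []) j + 1

/-- A chain is described by a pattern: its sequence of edge labels is an initial segment
containing no label equal to `1`, followed by some number of repetitions of a fixed
length-`w` sequence which is a permutation of `(1, 2, …, w)`. -/
def PatternChain (w : ℕ) (c : List (List ℕ)) : Prop :=
  ∃ labels : List ℕ,
    labels.length + 1 = c.length ∧
    (∀ t, t + 1 < c.length → EdgeLabelAt c t (labels.getD t 0)) ∧
    ∃ (init rep : List ℕ) (r : ℕ),
      labels = init ++ (List.replicate r rep).flatten ∧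
      (∀ x ∈ init, x ≠ 1) ∧
      rep.Perm (List.range' 1 w)

/-- The restriction of a chain to `L(w,h)`: remove the elements with more than `h`
parts. -/
def restrictChain (h : ℕ) (c : List (List ℕ)) : List (List ℕ) :=
  c.filter (fun l => decide (l.length ≤ h))



def part3 (t : ℕ × ℕ × ℕ) : List ℕ :=
  List.replicate t.2.2 3 ++ List.replicate (t.2.1 - t.2.2) 2 ++ List.replicate (t.1 - t.2.1) 1

lemma part3_mk (a b c : ℕ) : part3 (a,b,c) =
    List.replicate c 3 ++ List.replicate (b - c) 2 ++ List.replicate (a - b) 1 := rfl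

lemma part3_length {a b c : ℕ} (h1 : c ≤ b) (h2 : b ≤ a) : (part3 (a,b,c)).length = a := by
  rw [part3_mk]; simp; omega

lemma part3_sum {a b c : ℕ} (h1 : c ≤ b) (h2 : b ≤ a) : (part3 (a,b,c)).sum = a + b + c := by
  rw [part3_mk]; simp [List.sum_replicate]; omega

lemma getD_replicate' (x n i : ℕ) : (List.replicate n x).getD i 0 = if i < n then x else 0 := by
  induction n generalizing i with
  | zero => simp
  | succ n ih =>
    cases i with
    | zero => simp [List.replicate_succ]
    | succ i =>
      rw [List.replicate_succ, List.getD_cons_succ, ih]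
      split_ifs <;> omega

lemma getD_rep_append (x n : ℕ) (l : List ℕ) (i : ℕ) :
    ((List.replicate n x) ++ l).getD i 0 = if i < n then x else l.getD (i - n) 0 := by
  by_cases h : i < n
  · rw [List.getD_append _ _ _ _ (by simpa using h), if_pos h, getD_replicate', if_pos h]
  · rw [List.getD_append_right _ _ _ _ (by simpa using not_lt.mp h), if_neg h,
      List.length_replicate]

lemma part3_getD {a b c : ℕ} (h1 : c ≤ b) (h2 : b ≤ a) (i : ℕ) :
    (part3 (a,b,c)).getD i 0 =
      if i < c then 3 else if i < b then 2 else if i < a then 1 else 0 := by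
  rw [part3_mk, List.append_assoc, getD_rep_append, getD_rep_append, getD_replicate']
  split_ifs <;> omega

lemma part3_sorted {a b c : ℕ} : (part3 (a,b,c)).Pairwise (· ≥ ·) := by
  rw [part3_mk, List.pairwise_append, List.pairwise_append]
  refine ⟨⟨List.pairwise_replicate.mpr (Or.inr le_rfl), List.pairwise_replicate.mpr (Or.inr le_rfl), ?_⟩,
    List.pairwise_replicate.mpr (Or.inr le_rfl), ?_⟩
  · intro x hx y hy
    rw [List.eq_of_mem_replicate hx, List.eq_of_mem_replicate hy]; omega
  · intro x hx y hy
    rw [List.eq_of_mem_replicate hy]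
    rcases List.mem_append.mp hx with hx | hx <;> rw [List.eq_of_mem_replicate hx] <;> omega

lemma part3_bounded {a b c : ℕ} : ∀ x ∈ part3 (a,b,c), 0 < x ∧ x ≤ 3 := by
  intro x hx
  rw [part3_mk] at hx
  rcases List.mem_append.mp hx with hx | hx
  · rcases List.mem_append.mp hx with hx | hx <;> rw [List.eq_of_mem_replicate hx] <;> omega
  · rw [List.eq_of_mem_replicate hx]; omega

lemma countP_replicate' (p : ℕ → Bool) (x n : ℕ) :
    (List.replicate n x).countP p = if p x then n else 0 := by
  induction n with
  | zero => simp
  | succ n ih =>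
    rw [List.replicate_succ, List.countP_cons, ih]
    by_cases h : p x <;> simp [h]

lemma conjCount_part3_one {a b c : ℕ} (h1 : c ≤ b) (h2 : b ≤ a) :
    conjCount (part3 (a,b,c)) 1 = a := by
  unfold conjCount
  rw [part3_mk, List.countP_append, List.countP_append, countP_replicate', countP_replicate',
    countP_replicate']
  norm_num; omega

lemma conjCount_part3_two {a b c : ℕ} (h1 : c ≤ b) (h2 : b ≤ a) :
    conjCount (part3 (a,b,c)) 2 = b := by
  unfold conjCount
  rw [part3_mk, List.countP_append, List.countP_append, countP_replicate', countP_replicate',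
    countP_replicate']
  norm_num; omega

lemma conjCount_part3_three {a b c : ℕ} (h1 : c ≤ b) (h2 : b ≤ a) :
    conjCount (part3 (a,b,c)) 3 = c := by
  unfold conjCount
  rw [part3_mk, List.countP_append, List.countP_append, countP_replicate', countP_replicate',
    countP_replicate']
  norm_num

lemma part3_inj {a b c a' b' c' : ℕ} (h1 : c ≤ b) (h2 : b ≤ a) (h1' : c' ≤ b') (h2' : b' ≤ a')
    (heq : part3 (a,b,c) = part3 (a',b',c')) : a = a' ∧ b = b' ∧ c = c' := by
  refine ⟨?_, ?_, ?_⟩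
  · rw [← part3_length h1 h2, ← part3_length h1' h2', heq]
  · rw [← conjCount_part3_two h1 h2, ← conjCount_part3_two h1' h2', heq]
  · rw [← conjCount_part3_three h1 h2, ← conjCount_part3_three h1' h2', heq]

lemma canonical_form (l : List ℕ) (hs : l.Pairwise (· ≥ ·)) (hb : ∀ x ∈ l, 0 < x ∧ x ≤ 3) :
    l = part3 (l.length, conjCount l 2, conjCount l 3) ∧
      conjCount l 3 ≤ conjCount l 2 ∧ conjCount l 2 ≤ l.length := by
  induction l with
  | nil => simp [part3, conjCount]
  | cons x t ih =>
    rw [List.pairwise_cons] at hs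
    obtain ⟨hx, ht⟩ := hs
    obtain ⟨ihe, ih1, ih2⟩ := ih ht (fun y hy => hb y (List.mem_cons_of_mem _ hy))
    obtain ⟨hx0, hx3⟩ := hb x List.mem_cons_self
    have len : t.length = t.length := rfl
    interval_cases x
    · -- x = 1 : all of t equals 1
      have h2 : conjCount (1 :: t) 2 = 0 := by
        unfold conjCount
        rw [List.countP_eq_zero]
        intro y hy
        rcases List.mem_cons.mp hy with rfl | hy
        · decide
        · have := hx y hy; simp; omega
      have h3 : conjCount (1 :: t) 3 = 0 := by
        unfold conjCount
        rw [List.countP_eq_zero]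
        intro y hy
        rcases List.mem_cons.mp hy with rfl | hy
        · decide
        · have := hx y hy; simp; omega
      have ht1 : t = List.replicate t.length 1 := by
        apply List.eq_replicate_of_mem
        intro y hy
        have := (hb y (List.mem_cons_of_mem _ hy)).1
        have := hx y hy
        omega
      refine ⟨?_, by simp only [List.length_cons]; omega⟩
      rw [h2, h3, part3_mk]
      simp only [List.replicate_zero, List.nil_append, Nat.sub_zero, List.length_cons]
      rw [List.replicate_succ]
      exact congrArg _ ht1
    · -- x = 2
      have h3t : conjCount t 3 = 0 := by
        unfold conjCount
        rw [List.countP_eq_zero]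
        intro y hy
        have := hx y hy; simp; omega
      have h3 : conjCount (2 :: t) 3 = 0 := by
        unfold conjCount at *
        rw [List.countP_cons]
        simp [h3t]
      have h2 : conjCount (2 :: t) 2 = conjCount t 2 + 1 := by
        unfold conjCount
        rw [List.countP_cons]
        simp
      refine ⟨?_, by simp only [List.length_cons]; omega⟩
      rw [h2, h3, part3_mk]
      rw [h3t, part3_mk] at ihe
      simp only [List.replicate_zero, List.nil_append, Nat.sub_zero, List.length_cons] at ihe ⊢
      have e1 : t.length + 1 - (conjCount t 2 + 1) = t.length - conjCount t 2 := by omega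
      rw [e1, List.replicate_succ]
      exact congrArg _ ihe
    · -- x = 3
      have h3 : conjCount (3 :: t) 3 = conjCount t 3 + 1 := by
        unfold conjCount; rw [List.countP_cons]; simp
      have h2 : conjCount (3 :: t) 2 = conjCount t 2 + 1 := by
        unfold conjCount; rw [List.countP_cons]; simp
      refine ⟨?_, by simp only [List.length_cons]; omega⟩
      rw [h2, h3, part3_mk]
      rw [part3_mk] at ihe
      simp only [List.length_cons]
      have e1 : conjCount t 2 + 1 - (conjCount t 3 + 1) = conjCount t 2 - conjCount t 3 := by omega
      have e2 : t.length + 1 - (conjCount t 2 + 1) = t.length - conjCount t 2 := by omega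
      rw [e1, e2, List.replicate_succ]
      simp only [List.cons_append]
      exact congrArg _ ihe
def PV (g k : ℕ) : Prop := (g % 2 = 0 ∧ 4*k ≤ g) ∨ (g % 2 = 1 ∧ 4*k+3 ≤ g)

def slabT (g k : ℕ) : List (ℕ × ℕ × ℕ) :=
  if g % 2 = 0 then (List.range (g - 4*k + 1)).map (fun i => (g, k+i, k))
  else (List.range (g - 4*k - 1)).map (fun i => (g, k+i, k)) ++
       [(g, g - 2 - 3*k, k+1), (g, g - 1 - 3*k, k+1)]

def blockT (g k j : ℕ) : List (ℕ × ℕ × ℕ) :=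
  if g % 2 = 0 then
    [(g+j+1, g - 3*k + j, k+j), (g+j+1, g - 3*k + j+1, k+j), (g+j+1, g - 3*k + j+1, k+j+1)]
  else
    [(g+j+1, g - 1 - 3*k + j, k+1+j), (g+j+1, g - 1 - 3*k + j, k+j+2), (g+j+1, g - 3*k + j, k+j+2)]

def extT (g k : ℕ) : ℕ → List (ℕ × ℕ × ℕ)
  | 0 => []
  | d+1 => extT g k d ++ blockT g k d

def tchain (g k h : ℕ) : List (ℕ × ℕ × ℕ) := slabT g k ++ extT g k (h - g)

def Mem3 (g k a b c : ℕ) : Prop :=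
  (g % 2 = 0 ∧ 4*k ≤ g ∧
    ((a = g ∧ c = k ∧ k ≤ b ∧ b + 3*k ≤ g) ∨
     (g+1 ≤ a ∧ b + 3*k + 1 = a ∧ c + g + 1 = k + a) ∨
     (g+1 ≤ a ∧ b + 3*k = a ∧ c + g + 1 = k + a) ∨
     (g+1 ≤ a ∧ b + 3*k = a ∧ c + g = k + a))) ∨
  (g % 2 = 1 ∧ 4*k+3 ≤ g ∧
    ((a = g ∧ c = k ∧ k ≤ b ∧ b + 3*k + 2 ≤ g) ∨
     (a = g ∧ c = k+1 ∧ (b + 3*k + 2 = g ∨ b + 3*k + 1 = g)) ∨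
     (g+1 ≤ a ∧ b + 3*k + 2 = a ∧ c + g = k + a) ∨
     (g+1 ≤ a ∧ b + 3*k + 2 = a ∧ c + g = k + a + 1) ∨
     (g+1 ≤ a ∧ b + 3*k + 1 = a ∧ c + g = k + a + 1)))

lemma mem_blockT_iff {g k j : ℕ} (t : ℕ × ℕ × ℕ) :
    t ∈ blockT g k j ↔
      (g % 2 = 0 ∧ (t = (g+j+1, g - 3*k + j, k+j) ∨ t = (g+j+1, g - 3*k + j+1, k+j) ∨
        t = (g+j+1, g - 3*k + j+1, k+j+1))) ∨
      (g % 2 = 1 ∧ (t = (g+j+1, g - 1 - 3*k + j, k+1+j) ∨ t = (g+j+1, g - 1 - 3*k + j, k+j+2) ∨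
        t = (g+j+1, g - 3*k + j, k+j+2))) := by
  unfold blockT
  by_cases he : g % 2 = 0
  · rw [if_pos he]
    simp only [List.mem_cons, List.not_mem_nil, or_false]
    constructor
    · intro hm; exact Or.inl ⟨he, hm⟩
    · rintro (⟨_, hm⟩ | ⟨h1, _⟩)
      · exact hm
      · omega
  · rw [if_neg he]
    simp only [List.mem_cons, List.not_mem_nil, or_false]
    constructor
    · intro hm; exact Or.inr ⟨by omega, hm⟩
    · rintro (⟨h1, _⟩ | ⟨_, hm⟩)
      · omega
      · exact hm

lemma mem_extT_iff {g k d : ℕ} (t : ℕ × ℕ × ℕ) :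
    t ∈ extT g k d ↔ ∃ j < d, t ∈ blockT g k j := by
  induction d with
  | zero => simp [extT]
  | succ d ih =>
    simp only [extT, List.mem_append, ih]
    constructor
    · rintro (⟨j, hj, hm⟩ | hm)
      · exact ⟨j, by omega, hm⟩
      · exact ⟨d, by omega, hm⟩
    · rintro ⟨j, hj, hm⟩
      rcases Nat.lt_succ_iff_lt_or_eq.mp hj with hlt | rfl
      · exact Or.inl ⟨j, hlt, hm⟩
      · exact Or.inr hm

lemma mem_tchain_iff {g k h : ℕ} (hpv : PV g k) (hg : g ≤ h) (a b c : ℕ) :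
    (a, b, c) ∈ tchain g k h ↔ Mem3 g k a b c ∧ a ≤ h := by
  have hpv' := hpv; unfold PV at hpv'
  unfold tchain
  rw [List.mem_append, mem_extT_iff]
  constructor
  · rintro (hs | ⟨j, hj, hb⟩)
    · unfold slabT at hs
      unfold Mem3
      by_cases he : g % 2 = 0
      · rw [if_pos he] at hs
        simp only [List.mem_map, List.mem_range] at hs
        obtain ⟨i, hi, heq⟩ := hs
        simp only [Prod.mk.injEq] at heq
        exact ⟨Or.inl ⟨he, by omega, Or.inl ⟨by omega, by omega, by omega, by omega⟩⟩, by omega⟩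
      · rw [if_neg he] at hs
        simp only [List.mem_append, List.mem_map, List.mem_range, List.mem_cons,
          List.not_mem_nil, or_false] at hs
        rcases hs with ⟨i, hi, heq⟩ | heq | heq <;> simp only [Prod.mk.injEq] at heq
        · exact ⟨Or.inr ⟨by omega, by omega,
            Or.inl ⟨by omega, by omega, by omega, by omega⟩⟩, by omega⟩
        · exact ⟨Or.inr ⟨by omega, by omega,
            Or.inr (Or.inl ⟨by omega, by omega, Or.inl (by omega)⟩)⟩, by omega⟩
        · exact ⟨Or.inr ⟨by omega, by omega,
            Or.inr (Or.inl ⟨by omega, by omega, Or.inr (by omega)⟩)⟩, by omega⟩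
    · rw [mem_blockT_iff] at hb
      unfold Mem3
      rcases hb with ⟨he, heq | heq | heq⟩ | ⟨he, heq | heq | heq⟩ <;>
        simp only [Prod.mk.injEq] at heq
      · exact ⟨Or.inl ⟨he, by omega,
          Or.inr (Or.inl ⟨by omega, by omega, by omega⟩)⟩, by omega⟩
      · exact ⟨Or.inl ⟨he, by omega,
          Or.inr (Or.inr (Or.inl ⟨by omega, by omega, by omega⟩))⟩, by omega⟩
      · exact ⟨Or.inl ⟨he, by omega,
          Or.inr (Or.inr (Or.inr ⟨by omega, by omega, by omega⟩))⟩, by omega⟩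
      · exact ⟨Or.inr ⟨he, by omega,
          Or.inr (Or.inr (Or.inl ⟨by omega, by omega, by omega⟩))⟩, by omega⟩
      · exact ⟨Or.inr ⟨he, by omega,
          Or.inr (Or.inr (Or.inr (Or.inl ⟨by omega, by omega, by omega⟩)))⟩, by omega⟩
      · exact ⟨Or.inr ⟨he, by omega,
          Or.inr (Or.inr (Or.inr (Or.inr ⟨by omega, by omega, by omega⟩)))⟩, by omega⟩
  · rintro ⟨hm, ha⟩
    unfold Mem3 at hm
    unfold slabT
    rcases hm with ⟨he, hk, hm⟩ | ⟨he, hk, hm⟩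
    · rw [if_pos he]
      rcases hm with ⟨h1, h2, h3, h4⟩ | ⟨h1, h2, h3⟩ | ⟨h1, h2, h3⟩ | ⟨h1, h2, h3⟩
      · refine Or.inl ?_
        simp only [List.mem_map, List.mem_range]
        exact ⟨b - k, by omega, by simp only [Prod.mk.injEq]; omega⟩
      · refine Or.inr ⟨a - g - 1, by omega, (mem_blockT_iff _).mpr
          (Or.inl ⟨he, Or.inl (by simp only [Prod.mk.injEq]; omega)⟩)⟩
      · refine Or.inr ⟨a - g - 1, by omega, (mem_blockT_iff _).mpr
          (Or.inl ⟨he, Or.inr (Or.inl (by simp only [Prod.mk.injEq]; omega))⟩)⟩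
      · refine Or.inr ⟨a - g - 1, by omega, (mem_blockT_iff _).mpr
          (Or.inl ⟨he, Or.inr (Or.inr (by simp only [Prod.mk.injEq]; omega))⟩)⟩
    · rw [if_neg (by omega)]
      rcases hm with ⟨h1, h2, h3, h4⟩ | ⟨h1, h2, h3⟩ | ⟨h1, h2, h3⟩ | ⟨h1, h2, h3⟩ | ⟨h1, h2, h3⟩
      · refine Or.inl ?_
        simp only [List.mem_append, List.mem_map, List.mem_range, List.mem_cons,
          List.not_mem_nil, or_false]
        exact Or.inl ⟨b - k, by omega, by simp only [Prod.mk.injEq]; omega⟩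
      · refine Or.inl ?_
        simp only [List.mem_append, List.mem_map, List.mem_range, List.mem_cons,
          List.not_mem_nil, or_false]
        rcases h3 with h3 | h3
        · exact Or.inr (Or.inl (by simp only [Prod.mk.injEq]; omega))
        · exact Or.inr (Or.inr (by simp only [Prod.mk.injEq]; omega))
      · refine Or.inr ⟨a - g - 1, by omega, (mem_blockT_iff _).mpr
          (Or.inr ⟨he, Or.inl (by simp only [Prod.mk.injEq]; omega)⟩)⟩
      · refine Or.inr ⟨a - g - 1, by omega, (mem_blockT_iff _).mpr
          (Or.inr ⟨he, Or.inr (Or.inl (by simp only [Prod.mk.injEq]; omega))⟩)⟩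
      · refine Or.inr ⟨a - g - 1, by omega, (mem_blockT_iff _).mpr
          (Or.inr ⟨he, Or.inr (Or.inr (by simp only [Prod.mk.injEq]; omega))⟩)⟩
def CoversT (p q : ℕ × ℕ × ℕ) : Prop :=
  (q.1 = p.1 + 1 ∧ q.2.1 = p.2.1 ∧ q.2.2 = p.2.2) ∨
  (q.1 = p.1 ∧ q.2.1 = p.2.1 + 1 ∧ q.2.2 = p.2.2) ∨
  (q.1 = p.1 ∧ q.2.1 = p.2.1 ∧ q.2.2 = p.2.2 + 1)

def topT (g k d : ℕ) : ℕ × ℕ × ℕ :=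
  if g % 2 = 0 then (g+d, g - 3*k + d, k+d) else (g+d, g - 1 - 3*k + d, k+1+d)

lemma headI_append_of_ne_nil {α : Type*} [Inhabited α] {l m : List α} (h : l ≠ []) :
    (l ++ m).headI = l.headI := by
  cases l with
  | nil => exact absurd rfl h
  | cons x t => rfl

lemma getLast?_append_of_ne_nil {α : Type*} {l m : List α} {x : α} (h : m.getLast? = some x) :
    (l ++ m).getLast? = some x := by
  rw [List.getLast?_append, h]; rfl

lemma slabT_ne_nil (g k : ℕ) : slabT g k ≠ [] := by
  unfold slabT
  split <;> simp

lemma tchain_ne_nil (g k h : ℕ) : tchain g k h ≠ [] := by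
  unfold tchain
  simp [slabT_ne_nil]

lemma pv_odd {g k : ℕ} (hpv : PV g k) (he : ¬ g % 2 = 0) : 4*k+3 ≤ g := by
  rcases hpv with ⟨h1, _⟩ | ⟨_, h2⟩
  · omega
  · exact h2

lemma headI_slabT {g k : ℕ} (hpv : PV g k) : (slabT g k).headI = (g, k, k) := by
  unfold slabT
  by_cases he : g % 2 = 0
  · rw [if_pos he, List.range_succ_eq_map]
    simp
  · rw [if_neg he]
    obtain ⟨m, hm⟩ : ∃ m, g - 4*k - 1 = m + 1 := ⟨g - 4*k - 2, by have := pv_odd hpv he; omega⟩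
    rw [hm, List.range_succ_eq_map]
    simp

lemma headI_tchain {g k h : ℕ} (hpv : PV g k) : (tchain g k h).headI = (g, k, k) := by
  unfold tchain
  rw [headI_append_of_ne_nil (slabT_ne_nil g k), headI_slabT hpv]

lemma getLast?_slabT {g k : ℕ} (hpv : PV g k) : (slabT g k).getLast? = some (topT g k 0) := by
  unfold slabT topT
  by_cases he : g % 2 = 0
  · rw [if_pos he, if_pos he, List.range_succ, List.map_append]
    have hk : 4*k ≤ g := by rcases hpv with ⟨_, h1⟩ | ⟨h1, _⟩; · exact h1
                            · omega
    simp only [List.map_cons, List.map_nil, List.getLast?_concat, Option.some.injEq,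
      Prod.mk.injEq, and_true, true_and] <;> omega
  · rw [if_neg he, if_neg he]
    have hk := pv_odd hpv he
    rw [getLast?_append_of_ne_nil (by simp : [(g, g - 2 - 3*k, k+1), (g, g - 1 - 3*k, k+1)].getLast? = some (g, g - 1 - 3*k, k+1))]
    simp only [Option.some.injEq, Prod.mk.injEq, and_true, true_and] <;> omega

lemma blockT_ne_nil (g k j : ℕ) : blockT g k j ≠ [] := by
  unfold blockT; split <;> simp

lemma getLast?_blockT {g k : ℕ} (hpv : PV g k) (d : ℕ) :
    (blockT g k d).getLast? = some (topT g k (d+1)) := by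
  unfold blockT topT
  by_cases he : g % 2 = 0
  · rw [if_pos he, if_pos he]
    simp only [List.getLast?_cons_cons, List.getLast?_singleton, Option.some.injEq,
      Prod.mk.injEq, and_true, true_and] <;> omega
  · have hk := pv_odd hpv he
    rw [if_neg he, if_neg he]
    simp only [List.getLast?_cons_cons, List.getLast?_singleton, Option.some.injEq,
      Prod.mk.injEq, and_true, true_and] <;> omega

lemma getLast?_slab_ext {g k : ℕ} (hpv : PV g k) (d : ℕ) :
    (slabT g k ++ extT g k d).getLast? = some (topT g k d) := by
  induction d with
  | zero => rw [extT, List.append_nil]; exact getLast?_slabT hpv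
  | succ d ih =>
    show (slabT g k ++ (extT g k d ++ blockT g k d)).getLast? = _
    rw [← List.append_assoc,
      getLast?_append_of_ne_nil (getLast?_blockT hpv d)]

lemma chain'_slabT {g k : ℕ} (hpv : PV g k) : (slabT g k).Chain' CoversT := by
  have hmap : ∀ n, ((List.range n).map (fun i => ((g, k+i, k) : ℕ × ℕ × ℕ))).Chain' CoversT := by
    intro n
    unfold List.Chain'
    rw [List.isChain_map]
    induction n with
    | zero => simp
    | succ n ihn =>
      rw [List.range_succ]
      rcases Nat.eq_zero_or_pos n with rfl | hn
      · simp
      · rw [List.isChain_append]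
        refine ⟨ihn, List.isChain_singleton _, ?_⟩
        intro x hx y hy
        simp only [List.head?_cons, Option.mem_def, Option.some.injEq] at hy
        obtain ⟨m, hm⟩ : ∃ m, n = m + 1 := ⟨n - 1, by omega⟩
        rw [hm, List.range_succ, List.getLast?_concat] at hx
        simp only [Option.mem_def, Option.some.injEq] at hx
        subst hy
        right; left
        simp only [Prod.mk.injEq, and_true, true_and] <;> omega
  unfold slabT
  by_cases he : g % 2 = 0
  · rw [if_pos he]; exact hmap _
  · rw [if_neg he]
    have hk := pv_odd hpv he
    unfold List.Chain'
    rw [List.isChain_append]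
    refine ⟨hmap _, ?_, ?_⟩
    · apply List.isChain_cons_cons.mpr
      refine ⟨?_, List.isChain_singleton _⟩
      right; left; simp only [Prod.mk.injEq, and_true, true_and] <;> omega
    · intro x hx y hy
      simp only [List.head?_cons, Option.mem_def, Option.some.injEq] at hy
      obtain ⟨m, hm⟩ : ∃ m, g - 4*k - 1 = m + 1 := ⟨g - 4*k - 2, by omega⟩
      rw [hm, List.range_succ] at hx
      simp only [List.map_append, List.map_cons, List.map_nil, List.getLast?_concat,
        Option.mem_def, Option.some.injEq] at hx
      subst hy
      right; right
      simp only [← hx, Prod.mk.injEq, and_true, true_and] <;> omega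

lemma chain'_blockT {g k : ℕ} (hpv : PV g k) (d : ℕ) : (blockT g k d).Chain' CoversT := by
  unfold blockT
  by_cases he : g % 2 = 0
  · rw [if_pos he]
    refine List.isChain_cons_cons.mpr ⟨?_, List.isChain_cons_cons.mpr ⟨?_, List.isChain_singleton _⟩⟩
    · right; left; simp only [Prod.mk.injEq, and_true, true_and] <;> omega
    · right; right; simp only [Prod.mk.injEq, and_true, true_and] <;> omega
  · have hk := pv_odd hpv he
    rw [if_neg he]
    refine List.isChain_cons_cons.mpr ⟨?_, List.isChain_cons_cons.mpr ⟨?_, List.isChain_singleton _⟩⟩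
    · right; right; simp only [Prod.mk.injEq, and_true, true_and] <;> omega
    · right; left; simp only [Prod.mk.injEq, and_true, true_and] <;> omega

lemma head?_blockT (g k d : ℕ) :
    (blockT g k d).head? = some (g+d+1, (topT g k d).2.1, (topT g k d).2.2) := by
  unfold blockT topT
  by_cases he : g % 2 = 0
  · rw [if_pos he, if_pos he]; rfl
  · rw [if_neg he, if_neg he]; rfl

lemma chain'_slab_ext {g k : ℕ} (hpv : PV g k) (d : ℕ) :
    (slabT g k ++ extT g k d).Chain' CoversT := by
  induction d with
  | zero => rw [extT, List.append_nil]; exact chain'_slabT hpv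
  | succ d ih =>
    show ((slabT g k ++ (extT g k d ++ blockT g k d))).Chain' CoversT
    unfold List.Chain'
    rw [← List.append_assoc, List.isChain_append]
    refine ⟨ih, chain'_blockT hpv d, ?_⟩
    intro x hx y hy
    rw [getLast?_slab_ext hpv] at hx
    rw [head?_blockT] at hy
    simp only [Option.mem_def, Option.some.injEq] at hx hy
    subst hy; subst hx
    left
    refine ⟨?_, rfl, rfl⟩
    show g + d + 1 = (topT g k d).1 + 1
    unfold topT
    split <;> rfl

lemma chain'_tchain {g k h : ℕ} (hpv : PV g k) : (tchain g k h).Chain' CoversT :=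
  chain'_slab_ext hpv (h - g)

lemma getLast?_tchain {g k h : ℕ} (hpv : PV g k) :
    (tchain g k h).getLast? = some (topT g k (h - g)) :=
  getLast?_slab_ext hpv (h - g)
def labelFn (p q : ℕ × ℕ × ℕ) : ℕ :=
  if q.1 = p.1 + 1 then 1 else if q.2.1 = p.2.1 + 1 then 2 else 3

def labelsOf : List (ℕ × ℕ × ℕ) → List ℕ
  | p :: q :: r => labelFn p q :: labelsOf (q :: r)
  | _ => []

lemma labelsOf_length : ∀ (l : List (ℕ × ℕ × ℕ)), l ≠ [] → (labelsOf l).length + 1 = l.length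
  | [_], _ => rfl
  | p :: q :: r, _ => by
    show (labelFn p q :: labelsOf (q :: r)).length + 1 = (q :: r).length + 1
    rw [List.length_cons, labelsOf_length (q :: r) (by simp)]

lemma labelsOf_getD : ∀ (l : List (ℕ × ℕ × ℕ)) (t : ℕ), t + 1 < l.length →
    (labelsOf l).getD t 0 = labelFn (l.getD t (0,0,0)) (l.getD (t+1) (0,0,0))
  | [], t, ht => by simp at ht
  | [_], t, ht => by simp only [List.length_singleton] at ht; omega
  | p :: q :: r, 0, ht => rfl
  | p :: q :: r, t+1, ht => by
    show (labelsOf (q :: r)).getD t 0 = _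
    rw [labelsOf_getD (q :: r) t (by simpa using ht)]
    rfl

lemma labelsOf_append : ∀ (l m : List (ℕ × ℕ × ℕ)) (x y : ℕ × ℕ × ℕ),
    l.getLast? = some x → m.head? = some y →
    labelsOf (l ++ m) = labelsOf l ++ labelFn x y :: labelsOf m
  | [], m, x, y, hx, hy => by simp at hx
  | [a], m, x, y, hx, hy => by
    simp only [List.getLast?_singleton, Option.some.injEq] at hx
    cases m with
    | nil => simp at hy
    | cons b r =>
      simp only [List.head?_cons, Option.some.injEq] at hy
      subst hx; subst hy
      rfl
  | a :: b :: t, m, x, y, hx, hy => by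
    have hx' : (b :: t).getLast? = some x := by
      rw [List.getLast?_cons_cons] at hx; exact hx
    show labelFn a b :: labelsOf ((b :: t) ++ m) = _
    rw [labelsOf_append (b :: t) m x y hx' hy]
    rfl

lemma labelsOf_ne_one {g : ℕ} : ∀ (l : List (ℕ × ℕ × ℕ)), (∀ p ∈ l, p.1 = g) →
    ∀ x ∈ labelsOf l, x ≠ 1
  | [], _, x, hx => by simp [labelsOf] at hx
  | [_], _, x, hx => by simp [labelsOf] at hx
  | p :: q :: r, hl, x, hx => by
    rcases List.mem_cons.mp hx with rfl | hx
    · have hp : p.1 = g := hl p (by simp)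
      have hq : q.1 = g := hl q (by simp)
      unfold labelFn
      rw [if_neg (by omega)]
      split <;> omega
    · exact labelsOf_ne_one (q :: r) (fun p hp => hl p (List.mem_cons_of_mem _ hp)) x hx

lemma slabT_fst {g k : ℕ} : ∀ p ∈ slabT g k, p.1 = g := by
  intro p hp
  unfold slabT at hp
  by_cases he : g % 2 = 0
  · rw [if_pos he] at hp
    simp only [List.mem_map, List.mem_range] at hp
    obtain ⟨i, _, rfl⟩ := hp; rfl
  · rw [if_neg he] at hp
    simp only [List.mem_append, List.mem_map, List.mem_range, List.mem_cons,
      List.not_mem_nil, or_false] at hp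
    rcases hp with ⟨i, _, rfl⟩ | rfl | rfl <;> rfl

def repL (g : ℕ) : List ℕ := if g % 2 = 0 then [1, 2, 3] else [1, 3, 2]

lemma labelFn_top_block {g k : ℕ} (d : ℕ) :
    labelFn (topT g k d) (g+d+1, (topT g k d).2.1, (topT g k d).2.2) = 1 := by
  unfold labelFn
  rw [if_pos]
  show g + d + 1 = (topT g k d).1 + 1
  unfold topT; split <;> rfl

lemma labelFn_eq_two {p q : ℕ × ℕ × ℕ} (h1 : q.1 = p.1) (h2 : q.2.1 = p.2.1 + 1) :
    labelFn p q = 2 := by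
  unfold labelFn; rw [if_neg (by omega), if_pos h2]

lemma labelFn_eq_three {p q : ℕ × ℕ × ℕ} (h1 : q.1 = p.1) (h2 : q.2.1 = p.2.1) :
    labelFn p q = 3 := by
  unfold labelFn; rw [if_neg (by omega), if_neg (by omega)]

lemma labelsOf_blockT {g k : ℕ} (hpv : PV g k) (d : ℕ) :
    labelsOf (blockT g k d) = if g % 2 = 0 then [2, 3] else [3, 2] := by
  unfold blockT
  by_cases he : g % 2 = 0
  · rw [if_pos he, if_pos he]
    have e1 : labelFn (g+d+1, g - 3*k + d, k+d) (g+d+1, g - 3*k + d+1, k+d) = 2 :=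
      labelFn_eq_two rfl rfl
    have e2 : labelFn (g+d+1, g - 3*k + d+1, k+d) (g+d+1, g - 3*k + d+1, k+d+1) = 3 :=
      labelFn_eq_three rfl rfl
    show [labelFn _ _, labelFn _ _] = _
    rw [e1, e2]
  · have hk := pv_odd hpv he
    rw [if_neg he, if_neg he]
    have e1 : labelFn (g+d+1, g - 1 - 3*k + d, k+1+d) (g+d+1, g - 1 - 3*k + d, k+d+2) = 3 :=
      labelFn_eq_three rfl rfl
    have e2 : labelFn (g+d+1, g - 1 - 3*k + d, k+d+2) (g+d+1, g - 3*k + d, k+d+2) = 2 :=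
      labelFn_eq_two rfl (by show g - 3*k + d = g - 1 - 3*k + d + 1; omega)
    show [labelFn _ _, labelFn _ _] = _
    rw [e1, e2]

lemma labels_decomp {g k : ℕ} (hpv : PV g k) (d : ℕ) :
    labelsOf (slabT g k ++ extT g k d) =
      labelsOf (slabT g k) ++ (List.replicate d (repL g)).flatten := by
  induction d with
  | zero => rw [extT, List.append_nil]; simp
  | succ d ih =>
    show labelsOf ((slabT g k ++ (extT g k d ++ blockT g k d))) = _
    rw [← List.append_assoc]
    rw [labelsOf_append _ _ _ _ (getLast?_slab_ext hpv d) (head?_blockT g k d)]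
    rw [ih, labelFn_top_block d, labelsOf_blockT hpv d]
    rw [List.replicate_succ', List.flatten_append, List.append_assoc]
    congr 1
    simp only [List.flatten_cons, List.flatten_nil, List.append_nil]
    unfold repL
    split <;> rfl

lemma mem3_valid {g k a b c : ℕ} (hm : Mem3 g k a b c) : c ≤ b ∧ b ≤ a := by
  unfold Mem3 at hm
  constructor <;> omega

lemma mem3_unique {g k g' k' a b c : ℕ} (hm : Mem3 g k a b c) (hm' : Mem3 g' k' a b c) :
    g = g' ∧ k = k' := by
  unfold Mem3 at hm hm'
  omega

lemma mem3_exists {a b c : ℕ} (h1 : c ≤ b) (h2 : b ≤ a) :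
    ∃ g k, PV g k ∧ Mem3 g k a b c ∧ g ≤ a := by
  by_cases s1 : a % 2 = 0 ∧ b + 3*c ≤ a
  · exact ⟨a, c, Or.inl ⟨s1.1, by omega⟩,
      Or.inl ⟨s1.1, by omega, Or.inl ⟨rfl, rfl, h1, by omega⟩⟩, le_rfl⟩
  by_cases s2 : a % 2 = 1 ∧ b + 3*c + 2 ≤ a
  · exact ⟨a, c, Or.inr ⟨s2.1, by omega⟩,
      Or.inr ⟨s2.1, by omega, Or.inl ⟨rfl, rfl, h1, by omega⟩⟩, le_rfl⟩
  by_cases s3 : a % 2 = 1 ∧ 1 ≤ c ∧ (b + 3*c = a + 1 ∨ b + 3*c = a + 2) ∧ 4*c ≤ a + 1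
  · refine ⟨a, c - 1, Or.inr ⟨s3.1, by omega⟩,
      Or.inr ⟨s3.1, by omega, Or.inr (Or.inl ⟨rfl, by omega, ?_⟩)⟩, le_rfl⟩
    rcases s3.2.2.1 with h | h
    · exact Or.inl (by omega)
    · exact Or.inr (by omega)
  -- extension cases
  have hr : (a-b) % 3 = 0 ∨ (a-b) % 3 = 1 ∨ (a-b) % 3 = 2 := by omega
  set k := (a-b) / 3 with hkk
  set u := a - c + k with hu
  rcases hr with hr | hr | hr
  · by_cases pu : u % 2 = 1
    · exact ⟨u - 1, k, Or.inl ⟨by omega, by omega⟩,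
        Or.inl ⟨by omega, by omega, Or.inr (Or.inr (Or.inl ⟨by omega, by omega, by omega⟩))⟩,
        by omega⟩
    · exact ⟨u, k, Or.inl ⟨by omega, by omega⟩,
        Or.inl ⟨by omega, by omega, Or.inr (Or.inr (Or.inr ⟨by omega, by omega, by omega⟩))⟩,
        by omega⟩
  · by_cases pu : u % 2 = 1
    · exact ⟨u - 1, k, Or.inl ⟨by omega, by omega⟩,
        Or.inl ⟨by omega, by omega, Or.inr (Or.inl ⟨by omega, by omega, by omega⟩)⟩,
        by omega⟩
    · exact ⟨u + 1, k, Or.inr ⟨by omega, by omega⟩,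
        Or.inr ⟨by omega, by omega,
          Or.inr (Or.inr (Or.inr (Or.inr ⟨by omega, by omega, by omega⟩)))⟩,
        by omega⟩
  · by_cases pu : u % 2 = 1
    · exact ⟨u, k, Or.inr ⟨by omega, by omega⟩,
        Or.inr ⟨by omega, by omega,
          Or.inr (Or.inr (Or.inl ⟨by omega, by omega, by omega⟩))⟩,
        by omega⟩
    · exact ⟨u + 1, k, Or.inr ⟨by omega, by omega⟩,
        Or.inr ⟨by omega, by omega,
          Or.inr (Or.inr (Or.inr (Or.inl ⟨by omega, by omega, by omega⟩)))⟩,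
        by omega⟩
def chainL (g k h : ℕ) : List (List ℕ) := (tchain g k h).map part3

def Cset (h : ℕ) : Set (List (List ℕ)) := {c | ∃ g k, PV g k ∧ g ≤ h ∧ c = chainL g k h}

lemma chainL_ne_nil (g k h : ℕ) : chainL g k h ≠ [] := by
  unfold chainL
  simp only [ne_eq, List.map_eq_nil_iff]
  exact tchain_ne_nil g k h

lemma tchain_subset {g k h : ℕ} (hpv : PV g k) (hg : g ≤ h) :
    ∀ t ∈ tchain g k h, t.2.2 ≤ t.2.1 ∧ t.2.1 ≤ t.1 ∧ t.1 ≤ h := by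
  rintro ⟨a, b, c⟩ hm
  rw [mem_tchain_iff hpv hg] at hm
  obtain ⟨hm, ha⟩ := hm
  have := mem3_valid hm
  exact ⟨this.1, this.2, ha⟩

lemma headI_map_part3 {l : List (ℕ × ℕ × ℕ)} (hl : l ≠ []) :
    (l.map part3).headI = part3 l.headI := by
  cases l with
  | nil => exact absurd rfl hl
  | cons x t => rfl

lemma edge_step {p q : ℕ × ℕ × ℕ} (hp : p.2.2 ≤ p.2.1 ∧ p.2.1 ≤ p.1)
    (hq : q.2.2 ≤ q.2.1 ∧ q.2.1 ≤ q.1) (hc : CoversT p q) :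
    conjCount (part3 q) (labelFn p q) = conjCount (part3 p) (labelFn p q) + 1 := by
  obtain ⟨a, b, c⟩ := p
  obtain ⟨a', b', c'⟩ := q
  simp only at hp hq
  rcases hc with ⟨h1, h2, h3⟩ | ⟨h1, h2, h3⟩ | ⟨h1, h2, h3⟩ <;> simp only at h1 h2 h3
  · have hf : labelFn (a,b,c) (a',b',c') = 1 := by
      unfold labelFn; rw [if_pos h1]
    rw [hf, conjCount_part3_one hp.1 hp.2, conjCount_part3_one hq.1 hq.2]
    exact h1
  · have hf : labelFn (a,b,c) (a',b',c') = 2 := by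
      unfold labelFn; rw [if_neg (by show ¬(a' = a + 1); omega), if_pos h2]
    rw [hf, conjCount_part3_two hp.1 hp.2, conjCount_part3_two hq.1 hq.2]
    exact h2
  · have hf : labelFn (a,b,c) (a',b',c') = 3 := by
      unfold labelFn
      rw [if_neg (by show ¬(a' = a + 1); omega), if_neg (by show ¬(b' = b + 1); omega)]
    rw [hf, conjCount_part3_three hp.1 hp.2, conjCount_part3_three hq.1 hq.2]
    exact h3

lemma coversBox_step {p q : ℕ × ℕ × ℕ} (hp : p.2.2 ≤ p.2.1 ∧ p.2.1 ≤ p.1)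
    (hq : q.2.2 ≤ q.2.1 ∧ q.2.1 ≤ q.1) (hc : CoversT p q) :
    CoversBox (part3 p) (part3 q) := by
  obtain ⟨a, b, c⟩ := p
  obtain ⟨a', b', c'⟩ := q
  simp only at hp hq
  constructor
  · intro i
    rw [part3_getD hp.1 hp.2, part3_getD hq.1 hq.2]
    rcases hc with ⟨h1, h2, h3⟩ | ⟨h1, h2, h3⟩ | ⟨h1, h2, h3⟩ <;>
      simp only at h1 h2 h3 <;> (split_ifs <;> omega)
  · rw [part3_sum hp.1 hp.2, part3_sum hq.1 hq.2]
    rcases hc with ⟨h1, h2, h3⟩ | ⟨h1, h2, h3⟩ | ⟨h1, h2, h3⟩ <;>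
      simp only at h1 h2 h3 <;> omega

theorem isSCD_Cset (h : ℕ) : IsSCD 3 h (Cset h) := by
  constructor
  · rintro c ⟨g, k, hpv, hg, rfl⟩
    exact chainL_ne_nil g k h
  · rintro c ⟨g, k, hpv, hg, rfl⟩ l hl
    obtain ⟨t, ht, rfl⟩ := List.mem_map.mp hl
    obtain ⟨hv1, hv2, hv3⟩ := tchain_subset hpv hg t ht
    obtain ⟨a, b, c⟩ := t
    exact ⟨part3_sorted, part3_bounded, by rw [part3_length hv1 hv2]; exact hv3⟩
  · rintro c ⟨g, k, hpv, hg, rfl⟩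
    unfold List.Chain'
    rw [List.isChain_iff_getElem]
    intro i hi
    simp only [chainL, List.length_map] at hi
    have h1 : i < (tchain g k h).length := by omega
    have h2 : i + 1 < (tchain g k h).length := by omega
    simp only [chainL, List.get_eq_getElem, List.getElem_map]
    apply coversBox_step
    · have := tchain_subset hpv hg _ (List.getElem_mem h1)
      exact ⟨this.1, this.2.1⟩
    · have := tchain_subset hpv hg _ (List.getElem_mem h2)
      exact ⟨this.1, this.2.1⟩
    · have hc := chain'_tchain (h := h) hpv
      unfold List.Chain' at hc
      rw [List.isChain_iff_getElem] at hc
      simpa using hc i (by omega)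
  · rintro c ⟨g, k, hpv, hg, rfl⟩
    have hne := tchain_ne_nil g k h
    unfold chainL
    rw [headI_map_part3 hne, headI_tchain hpv]
    rw [List.getLastD_eq_getLast?, List.getLast?_map, getLast?_tchain hpv]
    simp only [Option.map_some, Option.getD_some]
    have hk : 4*k ≤ g := by rcases hpv with ⟨_, h1⟩ | ⟨h1, h2⟩; · exact h1
                            · omega
    rw [part3_sum (le_refl k) (by omega)]
    unfold topT
    by_cases he : g % 2 = 0
    · rw [if_pos he, part3_sum (by omega) (by omega)]
      omega
    · have := pv_odd hpv he
      rw [if_neg he, part3_sum (by omega) (by omega)]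
      omega
  · intro l hl
    obtain ⟨hsort, hbnd, hlen⟩ := hl
    obtain ⟨hcan, hc1, hc2⟩ := canonical_form l hsort hbnd
    set a := l.length with hadef
    set b := conjCount l 2 with hbdef
    set c := conjCount l 3 with hcdef
    obtain ⟨g, k, hpv, hm, hga⟩ := mem3_exists hc1 hc2
    have hgh : g ≤ h := le_trans hga hlen
    refine ⟨chainL g k h, ⟨⟨g, k, hpv, hgh, rfl⟩, ?_⟩, ?_⟩
    · apply List.mem_map.mpr
      exact ⟨(a, b, c), (mem_tchain_iff hpv hgh a b c).mpr ⟨hm, hlen⟩, hcan.symm⟩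
    · rintro c' ⟨⟨g', k', hpv', hg', rfl⟩, hl'⟩
      obtain ⟨t', ht', heq⟩ := List.mem_map.mp hl'
      obtain ⟨a', b', c''⟩ := t'
      rw [mem_tchain_iff hpv' hg'] at ht'
      obtain ⟨hm', _⟩ := ht'
      have hv' := mem3_valid hm'
      have heq2 : part3 (a', b', c'') = part3 (a, b, c) := by rw [heq, hcan]
      obtain ⟨e1, e2, e3⟩ := part3_inj hv'.1 hv'.2 hc1 hc2 heq2
      subst e1; subst e2; subst e3
      obtain ⟨e1, e2⟩ := mem3_unique hm' hm
      rw [e1, e2]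

theorem pattern_Cset (h : ℕ) : ∀ c ∈ Cset h, PatternChain 3 c := by
  rintro c ⟨g, k, hpv, hg, rfl⟩
  have hne := tchain_ne_nil g k h
  refine ⟨labelsOf (tchain g k h), ?_, ?_, labelsOf (slabT g k), repL g, h - g, ?_, ?_, ?_⟩
  · rw [labelsOf_length _ hne]
    simp [chainL]
  · intro t ht
    simp only [chainL, List.length_map] at ht
    rw [labelsOf_getD _ t ht]
    have h1 : t < (tchain g k h).length := by omega
    have h2 : t + 1 < (tchain g k h).length := by omega
    have gd1 : (chainL g k h).getD t [] = part3 ((tchain g k h).getD t (0,0,0)) := by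
      rw [List.getD_eq_getElem _ _ (by simpa [chainL] using h1),
        List.getD_eq_getElem _ _ h1]
      simp [chainL]
    have gd2 : (chainL g k h).getD (t+1) [] = part3 ((tchain g k h).getD (t+1) (0,0,0)) := by
      rw [List.getD_eq_getElem _ _ (by simpa [chainL] using h2),
        List.getD_eq_getElem _ _ h2]
      simp [chainL]
    unfold EdgeLabelAt
    rw [gd1, gd2, List.getD_eq_getElem _ _ h1, List.getD_eq_getElem _ _ h2]
    apply edge_step
    · have := tchain_subset hpv hg _ (List.getElem_mem h1)
      exact ⟨this.1, this.2.1⟩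
    · have := tchain_subset hpv hg _ (List.getElem_mem h2)
      exact ⟨this.1, this.2.1⟩
    · have hc := chain'_tchain (h := h) hpv
      unfold List.Chain' at hc
      rw [List.isChain_iff_getElem] at hc
      simpa using hc t (by omega)
  · exact labels_decomp hpv (h - g)
  · exact labelsOf_ne_one _ slabT_fst
  · unfold repL
    split <;> decide

lemma restrict_chainL {g k h : ℕ} (hpv : PV g k) (hh : 1 ≤ h) (hg : g ≤ h - 1) :
    restrictChain (h-1) (chainL g k h) = chainL g k (h-1) := by
  unfold restrictChain chainL
  rw [List.filter_map]
  simp only [Function.comp_def]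
  congr 1
  have hsplit : h - g = (h - 1 - g) + 1 := by omega
  have htc : tchain g k h = tchain g k (h-1) ++ blockT g k (h - 1 - g) := by
    unfold tchain
    rw [hsplit]
    show _ = slabT g k ++ extT g k (h-1-g) ++ blockT g k (h-1-g)
    rw [List.append_assoc]
    rfl
  rw [htc, List.filter_append]
  have e1 : (tchain g k (h-1)).filter (fun t => decide ((part3 t).length ≤ h - 1)) =
      tchain g k (h-1) := by
    apply List.filter_eq_self.mpr
    intro t ht
    obtain ⟨hv1, hv2, hv3⟩ := tchain_subset hpv hg t ht
    obtain ⟨x, y, z⟩ := t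
    simp only [decide_eq_true_eq]
    rw [part3_length hv1 hv2]
    exact hv3
  have e2 : (blockT g k (h-1-g)).filter (fun t => decide ((part3 t).length ≤ h - 1)) = [] := by
    apply List.filter_eq_nil_iff.mpr
    intro t ht
    rw [mem_blockT_iff] at ht
    have hfst : t.1 = g + (h-1-g) + 1 := by
      rcases ht with ⟨_, rfl | rfl | rfl⟩ | ⟨_, rfl | rfl | rfl⟩ <;> rfl
    obtain ⟨x, y, z⟩ := t
    simp only at hfst
    subst hfst
    have hvv : z ≤ y ∧ y ≤ g + (h-1-g) + 1 := by
      have := tchain_subset hpv (show g ≤ h by omega) (g + (h-1-g) + 1, y, z) ?_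
      · exact ⟨this.1, this.2.1⟩
      · unfold tchain
        rw [hsplit]
        show _ ∈ slabT g k ++ (extT g k (h-1-g) ++ blockT g k (h-1-g))
        rw [← List.append_assoc]
        exact List.mem_append_right _ (by rw [mem_blockT_iff]; exact ht)
    simp only [decide_eq_true_eq]
    rw [part3_length hvv.1 hvv.2]
    omega
  rw [e1, e2, List.append_nil]

lemma restrict_chainL_nil {g k h : ℕ} (hpv : PV g k) (hh : 1 ≤ h) (hg : g = h) :
    restrictChain (h-1) (chainL g k h) = [] := by
  subst hg
  unfold restrictChain chainL
  rw [List.filter_map]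
  simp only [Function.comp_def]
  rw [List.map_eq_nil_iff]
  apply List.filter_eq_nil_iff.mpr
  intro t ht
  have htc : tchain g k g = slabT g k := by
    unfold tchain
    rw [Nat.sub_self]
    exact List.append_nil _
  rw [htc] at ht
  have hfst := slabT_fst t ht
  obtain ⟨hv1, hv2, hv3⟩ := tchain_subset hpv (le_refl g) t (by rw [htc]; exact ht)
  obtain ⟨x, y, z⟩ := t
  simp only at hfst
  subst hfst
  simp only [decide_eq_true_eq]
  rw [part3_length hv1 hv2]
  omega

/-- For every h ≥ 1 there is a symmetric chain decomposition of L(3,h)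
satisfying the pattern condition and restricting to a symmetric chain decomposition of
L(3,h−1). -/
theorem scd_L3_pattern_restrict (h : ℕ) (hh : 1 ≤ h) :
    ∃ C : Set (List (List ℕ)),
      IsSCD 3 h C ∧
      (∀ c ∈ C, PatternChain 3 c) ∧
      IsSCD 3 (h - 1) {c' | c' ≠ [] ∧ ∃ c ∈ C, c' = restrictChain (h - 1) c} := by
  refine ⟨Cset h, isSCD_Cset h, pattern_Cset h, ?_⟩
  have hset : {c' | c' ≠ [] ∧ ∃ c ∈ Cset h, c' = restrictChain (h - 1) c} = Cset (h-1) := by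
    ext c'
    constructor
    · rintro ⟨hne, c, ⟨g, k, hpv, hg, rfl⟩, rfl⟩
      by_cases hgle : g ≤ h - 1
      · exact ⟨g, k, hpv, hgle, (restrict_chainL hpv hh hgle).symm ▸ rfl⟩
      · exfalso
        apply hne
        exact restrict_chainL_nil hpv hh (by omega)
    · rintro ⟨g, k, hpv, hg, rfl⟩
      refine ⟨chainL_ne_nil g k (h-1), chainL g k h, ⟨g, k, hpv, by omega, rfl⟩,
        (restrict_chainL hpv hh hg).symm⟩
  rw [hset]
  exact isSCD_Cset (h-1)
end
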